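/- arXiv:1711.03515 — 5 statements merged into one kernel-verified Lean document; each statement's English description precedes it below -/
import Mathlib

section
/- For a nonempty subset T ⊆ {0, 1, …, n−1}, let g_T = lclm(x − θ^i(β) : i ∈ T) ∈ S, and let T̄ ⊆ Z/nZ be the smallest union of cosets of the subgroup C_s = {0, μ, …, (s−1)μ} of Z/nZ that contains T. Then g_{T̄} = \overline{g_T}, the monic generator of the left ideal S·g_T ∩ R of R; in particular g_{T̄} has all its coefficients in L. -/
/-! Skew polynomials over a field `M` twisted by a ring automorphism `θ` (`x·a = θ(a)·x`),
modeled as finitely supported functions `ℕ →₀ M` (coefficient of `xⁱ` at `i`),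
with left-coefficient multiplication `(Σᵢ aᵢ xⁱ)·(Σⱼ bⱼ xʲ) = Σᵢⱼ aᵢ θⁱ(bⱼ) x^{i+j}`. -/

variable {M : Type*} [Field M]

/-- Multiplication of skew polynomials: `f * g` in `M[x;θ]`. -/
noncomputable def sMul (θ : M ≃+* M) (f g : ℕ →₀ M) : ℕ →₀ M :=
  f.sum fun i a => g.sum fun j b => Finsupp.single (i + j) (a * (θ ^ i) b)

/-- The skew polynomial `x - γ`. -/
noncomputable def Xsub (γ : M) : ℕ →₀ M := Finsupp.single 1 1 - Finsupp.single 0 γ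

/-- The skew polynomial `xⁿ - 1`. -/
noncomputable def XnSubOne (n : ℕ) : ℕ →₀ M := Finsupp.single n 1 - Finsupp.single 0 1

/-- The left ideal `S·f = {q·f : q ∈ S}` of `S = M[x;θ]`. -/
def lIdeal (θ : M ≃+* M) (f : ℕ →₀ M) : Set (ℕ →₀ M) := {h | ∃ q, h = sMul θ q f}

/-- `g` right-divides `f` in `M[x;θ]`, i.e. `f ∈ S·g`. -/
def rdvd (θ : M ≃+* M) (g f : ℕ →₀ M) : Prop := f ∈ lIdeal θ g

/-- The fixed subfield of an automorphism. -/
noncomputable def fixedSubfield (φ : M ≃+* M) : Subfield M where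
  carrier := {a | φ a = a}
  zero_mem' := map_zero φ
  one_mem' := map_one φ
  add_mem' := by intro a b ha hb; simp only [Set.mem_setOf_eq, map_add] at *; rw [ha, hb]
  mul_mem' := by intro a b ha hb; simp only [Set.mem_setOf_eq, map_mul] at *; rw [ha, hb]
  neg_mem' := by intro a ha; simp only [Set.mem_setOf_eq, map_neg] at *; rw [ha]
  inv_mem' := by intro a ha; simp only [Set.mem_setOf_eq, map_inv₀] at *; rw [ha]

/-- A skew polynomial lies in the subring `R` of polynomials whose coefficients are fixed
by the automorphism `φ` (for `φ = θ^μ = π`, this is `R = L[x;σ]` with `L = M^π`). -/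
def inR (φ : M ≃+* M) (f : ℕ →₀ M) : Prop := ∀ j, φ (f j) = f j

/-- The polynomial of degree `< n` with coefficient vector `c`. -/
noncomputable def vecPoly {n : ℕ} (c : Fin n → M) : ℕ →₀ M :=
  ∑ j : Fin n, Finsupp.single (j : ℕ) (c j)

/-- Hamming weight of a vector. -/
noncomputable def hWt {n : ℕ} (c : Fin n → M) : ℕ := Set.ncard {j : Fin n | c j ≠ 0}

/-- `α` generates a normal basis `{α, θ(α), …, θ^{n-1}(α)}` of `M` over `K = M^θ`. -/
def NormalBasis (θ : M ≃+* M) (n : ℕ) (α : M) : Prop :=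
  LinearIndependent (fixedSubfield θ) (fun i : Fin n => (θ ^ (i : ℕ)) α) ∧
    Submodule.span (fixedSubfield θ) (Set.range fun i : Fin n => (θ ^ (i : ℕ)) α) = ⊤

/-- `f` is monic of degree `d`. -/
def IsMonicAt (f : ℕ →₀ M) (d : ℕ) : Prop := f d = 1 ∧ ∀ j, d < j → f j = 0

/-- `f` is monic. -/
def IsMonic (f : ℕ →₀ M) : Prop := ∃ d, IsMonicAt f d

/-- Coefficientwise application of an automorphism to a skew polynomial (`f ↦ f^φ`). -/
noncomputable def pmap (φ : M ≃+* M) (f : ℕ →₀ M) : ℕ →₀ M :=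
  Finsupp.mapRange φ (map_zero φ) f



section Aux

lemma sMul_apply (θ : M ≃+* M) (q g : ℕ →₀ M) (k : ℕ) :
    (sMul θ q g) k = ∑ i ∈ q.support, ∑ j ∈ g.support,
      if i + j = k then q i * (θ ^ i) (g j) else 0 := by
  simp only [sMul, Finsupp.sum_apply, Finsupp.sum, Finsupp.finset_sum_apply,
    Finsupp.single_apply]

lemma zero_sMul (θ : M ≃+* M) (g : ℕ →₀ M) : sMul θ 0 g = 0 := by
  unfold sMul; exact Finsupp.sum_zero_index

lemma const_sMul_apply (θ : M ≃+* M) {q : ℕ →₀ M} (g : ℕ →₀ M)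
    (hq : ∀ i, 0 < i → q i = 0) (k : ℕ) : (sMul θ q g) k = q 0 * g k := by
  rw [sMul_apply]
  rw [Finset.sum_eq_single 0]
  · simp only [zero_add, pow_zero]
    have h1 : ∀ j ∈ g.support, (if j = k then q 0 * (1 : M ≃+* M) (g j) else 0)
        = (if j = k then q 0 * g j else 0) := by intro j _; rfl
    rw [Finset.sum_congr rfl h1, Finset.sum_ite_eq' g.support k (fun j => q 0 * g j)]
    by_cases h : k ∈ g.support
    · simp [h]
    · simp [h, Finsupp.notMem_support_iff.mp h]
  · intro b hb hb0
    exact absurd (hq b (Nat.pos_of_ne_zero hb0)) (Finsupp.mem_support_iff.mp hb)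
  · intro h0
    simp [Finsupp.notMem_support_iff.mp h0]

lemma one_sMul (θ : M ≃+* M) (g : ℕ →₀ M) : sMul θ (Finsupp.single 0 1) g = g := by
  ext k
  rw [const_sMul_apply θ g (fun i hi => by
    rw [Finsupp.single_apply, if_neg (by omega)])]
  simp

lemma sMul_coeff_top (θ : M ≃+* M) {q g : ℕ →₀ M} {m e : ℕ}
    (hm : ∀ i, m < i → q i = 0) (hg : IsMonicAt g e) :
    (sMul θ q g) (m + e) = q m := by
  have hvan : ∀ i ∈ q.support, i ≠ m →
      (∑ j ∈ g.support, if i + j = m + e then q i * (θ ^ i) (g j) else 0) = 0 := by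
    intro i hi him
    have hile : i ≤ m := le_of_not_gt fun h => Finsupp.mem_support_iff.mp hi (hm i h)
    refine Finset.sum_eq_zero fun j hj => if_neg fun hc => ?_
    have hjle : j ≤ e := le_of_not_gt fun h => Finsupp.mem_support_iff.mp hj (hg.2 j h)
    have : i = m := by omega
    exact him this
  rw [sMul_apply]
  by_cases hqm : m ∈ q.support
  · rw [Finset.sum_eq_single_of_mem m hqm hvan]
    have hge : e ∈ g.support := Finsupp.mem_support_iff.mpr (by rw [hg.1]; exact one_ne_zero)
    rw [Finset.sum_eq_single_of_mem e hge]
    · rw [if_pos rfl, hg.1, map_one, mul_one]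
    · intro j hj hje
      refine if_neg fun hc => hje (by omega)
  · rw [Finsupp.notMem_support_iff.mp hqm]
    refine Finset.sum_eq_zero fun i hi => hvan i hi fun h => ?_
    exact Finsupp.mem_support_iff.mp hi (h ▸ Finsupp.notMem_support_iff.mp hqm)

lemma sMul_coeff_hi (θ : M ≃+* M) {q g : ℕ →₀ M} {m e : ℕ}
    (hm : ∀ i, m < i → q i = 0) (hg : ∀ j, e < j → g j = 0) {k : ℕ} (hk : m + e < k) :
    (sMul θ q g) k = 0 := by
  rw [sMul_apply]
  refine Finset.sum_eq_zero fun i hi => Finset.sum_eq_zero fun j hj => if_neg fun hc => ?_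
  have h1 : i ≤ m := le_of_not_gt fun h => Finsupp.mem_support_iff.mp hi (hm i h)
  have h2 : j ≤ e := le_of_not_gt fun h => Finsupp.mem_support_iff.mp hj (hg j h)
  omega

lemma monic_mutual_eq (θ : M ≃+* M) {f g q r : ℕ →₀ M} {d e : ℕ}
    (hf : IsMonicAt f d) (hg : IsMonicAt g e)
    (h1 : f = sMul θ q g) (h2 : g = sMul θ r f) : f = g := by
  have hf0 : f ≠ 0 := fun h => one_ne_zero (α := M) (by rw [← hf.1, h]; rfl)
  have hg0 : g ≠ 0 := fun h => one_ne_zero (α := M) (by rw [← hg.1, h]; rfl)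
  have hq0 : q ≠ 0 := fun h => hf0 (by rw [h1, h, zero_sMul])
  have hr0 : r ≠ 0 := fun h => hg0 (by rw [h2, h, zero_sMul])
  have hqne : q.support.Nonempty := Finsupp.support_nonempty_iff.mpr hq0
  have hrne : r.support.Nonempty := Finsupp.support_nonempty_iff.mpr hr0
  set m := q.support.max' hqne with hm
  set m' := r.support.max' hrne with hm'
  have hmq : q m ≠ 0 := Finsupp.mem_support_iff.mp (Finset.max'_mem _ hqne)
  have hmr : r m' ≠ 0 := Finsupp.mem_support_iff.mp (Finset.max'_mem _ hrne)
  have hmhi : ∀ i, m < i → q i = 0 := fun i h =>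
    Finsupp.notMem_support_iff.mp fun hi => absurd (Finset.le_max' _ i hi) (not_le.mpr h)
  have hmhi' : ∀ i, m' < i → r i = 0 := fun i h =>
    Finsupp.notMem_support_iff.mp fun hi => absurd (Finset.le_max' _ i hi) (not_le.mpr h)
  have htop : f (m + e) = q m := by rw [h1]; exact sMul_coeff_top θ hmhi hg
  have htop' : g (m' + d) = r m' := by rw [h2]; exact sMul_coeff_top θ hmhi' hf
  have hle1 : m + e ≤ d := le_of_not_gt fun h => hmq (htop ▸ hf.2 _ h)
  have hle2 : m' + d ≤ e := le_of_not_gt fun h => hmr (htop' ▸ hg.2 _ h)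
  have hge1 : d ≤ m + e := by
    by_contra h
    have : f d = 0 := by rw [h1]; exact sMul_coeff_hi θ hmhi hg.2 (not_le.mp h)
    rw [hf.1] at this; exact one_ne_zero this
  have hmz : m = 0 ∧ d = e := by omega
  have hq1 : q 0 = 1 := by
    have := htop
    rw [hmz.1, zero_add, ← hmz.2, hf.1] at this
    exact this.symm
  ext k
  rw [h1, const_sMul_apply θ g (fun i hi => hmhi i (hmz.1 ▸ hi)), hq1, one_mul]

lemma mem_lIdeal_self (θ : M ≃+* M) (f : ℕ →₀ M) : f ∈ lIdeal θ f :=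
  ⟨Finsupp.single 0 1, (one_sMul θ f).symm⟩

lemma monic_gen_unique (θ : M ≃+* M) {f g : ℕ →₀ M}
    (hf : IsMonic f) (hg : IsMonic g)
    (hfg : f ∈ lIdeal θ g) (hgf : g ∈ lIdeal θ f) : f = g := by
  obtain ⟨d, hf⟩ := hf
  obtain ⟨e, hg⟩ := hg
  obtain ⟨q, hq⟩ := hfg
  obtain ⟨r, hr⟩ := hgf
  exact monic_mutual_eq θ hf hg hq hr

lemma pmap_apply (φ : M ≃+* M) (f : ℕ →₀ M) (j : ℕ) : pmap φ f j = φ (f j) :=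
  Finsupp.mapRange_apply

lemma pmap_support (φ : M ≃+* M) (f : ℕ →₀ M) : (pmap φ f).support = f.support :=
  Finsupp.support_mapRange_of_injective (map_zero φ) f φ.injective

lemma pmap_sMul (θ φ : M ≃+* M) (hc : ∀ (i : ℕ) (x : M), φ ((θ ^ i) x) = (θ ^ i) (φ x))
    (q g : ℕ →₀ M) : pmap φ (sMul θ q g) = sMul θ (pmap φ q) (pmap φ g) := by
  ext k
  rw [pmap_apply, sMul_apply, sMul_apply, pmap_support, pmap_support, map_sum]
  refine Finset.sum_congr rfl fun i _ => ?_
  rw [map_sum]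
  refine Finset.sum_congr rfl fun j _ => ?_
  rw [apply_ite φ, map_zero, map_mul, hc, pmap_apply, pmap_apply]

lemma pmap_symm_pmap (φ : M ≃+* M) (f : ℕ →₀ M) : pmap φ.symm (pmap φ f) = f := by
  ext k; simp [pmap, Finsupp.mapRange_apply]

lemma pmap_pmap_symm (φ : M ≃+* M) (f : ℕ →₀ M) : pmap φ (pmap φ.symm f) = f := by
  ext k; simp [pmap, Finsupp.mapRange_apply]

lemma pmap_bijective (φ : M ≃+* M) : Function.Bijective (pmap (M := M) φ) :=
  Function.bijective_iff_has_inverse.mpr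
    ⟨pmap φ.symm, fun f => pmap_symm_pmap φ f, fun f => pmap_pmap_symm φ f⟩

lemma hc_symm (θ φ : M ≃+* M) (hc : ∀ (i : ℕ) (x : M), φ ((θ ^ i) x) = (θ ^ i) (φ x)) :
    ∀ (i : ℕ) (x : M), φ.symm ((θ ^ i) x) = (θ ^ i) (φ.symm x) := fun i x =>
  φ.injective (by rw [RingEquiv.apply_symm_apply, hc, RingEquiv.apply_symm_apply])

lemma pmap_Xsub (φ : M ≃+* M) (γ : M) : pmap φ (Xsub γ) = Xsub (φ γ) := by
  ext k
  simp [pmap, Xsub, Finsupp.mapRange_apply, Finsupp.single_apply, map_sub, apply_ite φ]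

lemma pmap_monicAt (φ : M ≃+* M) {f : ℕ →₀ M} {d : ℕ} (hf : IsMonicAt f d) :
    IsMonicAt (pmap φ f) d :=
  ⟨by rw [pmap_apply, hf.1, map_one], fun j hj => by rw [pmap_apply, hf.2 j hj, map_zero]⟩

lemma pmap_mem_lIdeal (θ φ : M ≃+* M) (hc : ∀ (i : ℕ) (x : M), φ ((θ ^ i) x) = (θ ^ i) (φ x))
    {h f : ℕ →₀ M} (hh : h ∈ lIdeal θ f) : pmap φ h ∈ lIdeal θ (pmap φ f) := by
  obtain ⟨q, hq⟩ := hh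
  exact ⟨pmap φ q, by rw [hq, pmap_sMul θ φ hc]⟩

lemma lIdeal_pmap (θ φ : M ≃+* M) (hc : ∀ (i : ℕ) (x : M), φ ((θ ^ i) x) = (θ ^ i) (φ x))
    (f : ℕ →₀ M) : lIdeal θ (pmap φ f) = pmap φ '' lIdeal θ f := by
  ext h
  constructor
  · rintro ⟨q, rfl⟩
    refine ⟨sMul θ (pmap φ.symm q) f, ⟨pmap φ.symm q, rfl⟩, ?_⟩
    rw [pmap_sMul θ φ hc, pmap_pmap_symm]
  · rintro ⟨h', hh', rfl⟩
    exact pmap_mem_lIdeal θ φ hc hh'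

end Aux

/-- Setting: `θ` of order `n = μ·s`, `π = θ^μ`, `R = L[x;σ]` the fixed ring of
the coefficientwise action of `π` on `S = M[x;θ]`, `α` generating a normal basis of `M/K` and
`β = α⁻¹θ(α)`. For a nonempty `T ⊆ {0, …, n-1}`, let `g_T = lclm(x - θⁱ(β) : i ∈ T)` (the monic
generator of `⋂_{i∈T} S·(x - θⁱ(β))`), let `T̄` be the smallest union of cosets of
`C_s = {0, μ, …, (s-1)μ} ≤ ℤ/nℤ` containing `T` (namely `{(i + mμ) mod n : i ∈ T, m}`), let
`g_{T̄}` be the corresponding monic lclm, and let `ḡ_T` be the monic generator of the left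
ideal `S·g_T ∩ R` of `R`. Then `g_{T̄} = ḡ_T`; in particular `g_{T̄}` has all its
coefficients in `L`. -/
theorem lclm_closure_eq_contraction {M : Type*} [Field M] (θ : M ≃+* M) (μ s n : ℕ)
    (hμ : 0 < μ) (hs : 0 < s) (hn : n = μ * s) (hord : orderOf θ = n)
    (α : M) (hα : NormalBasis θ n α) (β : M) (hβ : β = α⁻¹ * θ α)
    (T : Finset ℕ) (hTne : T.Nonempty) (hTn : ∀ i ∈ T, i < n)
    (gT : ℕ →₀ M) (hgTM : IsMonic gT)
    (hgTgen : lIdeal θ gT = ⋂ i ∈ T, lIdeal θ (Xsub ((θ ^ i) β)))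
    (gbar : ℕ →₀ M) (hgbarR : inR (θ ^ μ) gbar) (hgbarM : IsMonic gbar)
    (hgbargen : {h | ∃ q, inR (θ ^ μ) q ∧ h = sMul θ q gbar}
      = lIdeal θ gT ∩ {h | inR (θ ^ μ) h})
    (gTbar : ℕ →₀ M) (hgTbarM : IsMonic gTbar)
    (hgTbargen : lIdeal θ gTbar
      = ⋂ i ∈ Finset.image (fun p : ℕ × ℕ => (p.1 + p.2 * μ) % n) (T ×ˢ Finset.range s),
          lIdeal θ (Xsub ((θ ^ i) β))) :
    gTbar = gbar ∧ inR (θ ^ μ) gTbar := by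
  classical
  have hn0 : 0 < n := by rw [hn]; exact Nat.mul_pos hμ hs
  set π : M ≃+* M := θ ^ μ with hπ
  set Ibar : Finset ℕ :=
    Finset.image (fun p : ℕ × ℕ => (p.1 + p.2 * μ) % n) (T ×ˢ Finset.range s) with hIbar
  have hpowmod : ∀ a : ℕ, θ ^ (a % n) = θ ^ a := by
    intro a; rw [← hord]; exact pow_mod_orderOf θ a
  have hcπ : ∀ (i : ℕ) (x : M), π ((θ ^ i) x) = (θ ^ i) (π x) := by
    intro i x
    have h1 : (θ ^ μ) ((θ ^ i) x) = (θ ^ (i + μ)) x := by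
      rw [show i + μ = μ + i from Nat.add_comm i μ, pow_add]; rfl
    have h2 : (θ ^ i) ((θ ^ μ) x) = (θ ^ (i + μ)) x := by rw [pow_add]; rfl
    rw [hπ, h1, h2]
  have hexp : ∀ i : ℕ, π ((θ ^ i) β) = (θ ^ (i + μ)) β := by
    intro i; rw [hπ, show i + μ = μ + i from Nat.add_comm i μ, pow_add]; rfl
  -- Step A : gbar ∈ S·gTbar
  have hgbar_pmap : pmap π gbar = gbar := by
    ext j; rw [pmap_apply]; exact hgbarR j
  have hgbar_mem_gT : gbar ∈ lIdeal θ gT := by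
    have hone : inR π (Finsupp.single 0 (1 : M)) := by
      intro j; simp [Finsupp.single_apply, apply_ite π]
    have : gbar ∈ {h | ∃ q, inR π q ∧ h = sMul θ q gbar} :=
      ⟨Finsupp.single 0 1, hone, (one_sMul θ gbar).symm⟩
    rw [hgbargen] at this; exact this.1
  have hT_each : ∀ i ∈ T, gbar ∈ lIdeal θ (Xsub ((θ ^ i) β)) := by
    intro i hi
    rw [hgTgen] at hgbar_mem_gT
    exact Set.mem_iInter₂.mp hgbar_mem_gT i hi
  have hshift : ∀ i : ℕ, gbar ∈ lIdeal θ (Xsub ((θ ^ i) β)) →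
      gbar ∈ lIdeal θ (Xsub ((θ ^ (i + μ)) β)) := by
    intro i hi
    have h1 := pmap_mem_lIdeal θ π hcπ hi
    rw [hgbar_pmap, pmap_Xsub, hexp] at h1
    exact h1
  have hiter : ∀ (m i : ℕ), gbar ∈ lIdeal θ (Xsub ((θ ^ i) β)) →
      gbar ∈ lIdeal θ (Xsub ((θ ^ (i + m * μ)) β)) := by
    intro m
    induction m with
    | zero => intro i hi; simpa using hi
    | succ m ih =>
      intro i hi
      have h1 := hshift _ (ih i hi)
      rwa [show i + m * μ + μ = i + (m + 1) * μ by ring] at h1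
  have hgbar_mem_gTbar : gbar ∈ lIdeal θ gTbar := by
    rw [hgTbargen]
    refine Set.mem_iInter₂.mpr fun k hk => ?_
    obtain ⟨p, hp, rfl⟩ := Finset.mem_image.mp hk
    obtain ⟨hp1, hp2⟩ := Finset.mem_product.mp hp
    have h1 := hiter p.2 p.1 (hT_each p.1 hp1)
    rwa [show (θ ^ ((p.1 + p.2 * μ) % n)) β = (θ ^ (p.1 + p.2 * μ)) β by rw [hpowmod]]
  -- Step B : gTbar ∈ S·gT
  have hsub : gTbar ∈ lIdeal θ gT := by
    rw [hgTgen]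
    refine Set.mem_iInter₂.mpr fun i hi => ?_
    have hmem : (i + 0 * μ) % n ∈ Ibar :=
      Finset.mem_image.mpr ⟨(i, 0),
        Finset.mem_product.mpr ⟨hi, Finset.mem_range.mpr hs⟩, rfl⟩
    have h1 : gTbar ∈ lIdeal θ (Xsub ((θ ^ ((i + 0 * μ) % n)) β)) := by
      have h2 := mem_lIdeal_self θ gTbar
      rw [hgTbargen] at h2
      exact Set.mem_iInter₂.mp h2 _ hmem
    rwa [show (i + 0 * μ) % n = i by simp [Nat.mod_eq_of_lt (hTn i hi)]] at h1
  -- arithmetic helpers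
  have harith1 : ∀ t m : ℕ, m < s →
      ((t + ((m + (s - 1)) % s) * μ) % n + μ) % n = (t + m * μ) % n := by
    intro t m hm
    rw [Nat.mod_add_mod]
    rcases Nat.eq_zero_or_pos m with hm0 | hmp
    · subst hm0
      have h1 : (0 + (s - 1)) % s = s - 1 := by
        rw [Nat.zero_add]; exact Nat.mod_eq_of_lt (by omega)
      rw [h1]
      have h2 : t + (s - 1) * μ + μ = t + n := by
        have h3 : (s - 1) * μ + μ = ((s - 1) + 1) * μ := by ring
        have h4 : s - 1 + 1 = s := by omega
        rw [add_assoc, h3, h4, hn, Nat.mul_comm]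
      rw [h2, Nat.add_mod_right]
      simp
    · have h1 : (m + (s - 1)) % s = m - 1 := by
        rw [show m + (s - 1) = (m - 1) + s by omega, Nat.add_mod_right,
          Nat.mod_eq_of_lt (by omega)]
      rw [h1]
      congr 1
      have h3 : (m - 1) * μ + μ = ((m - 1) + 1) * μ := by ring
      have h4 : m - 1 + 1 = m := by omega
      rw [add_assoc, h3, h4]
  have harith2 : ∀ t m : ℕ, m < s →
      ((t + m * μ) % n + μ) % n = (t + ((m + 1) % s) * μ) % n := by
    intro t m hm
    rw [Nat.mod_add_mod]
    rcases Nat.lt_or_ge (m + 1) s with h | h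
    · rw [Nat.mod_eq_of_lt h]
      congr 1
      ring
    · have hms : m + 1 = s := by omega
      rw [hms, Nat.mod_self]
      have h2 : t + m * μ + μ = t + n := by
        have h3 : m * μ + μ = (m + 1) * μ := by ring
        rw [add_assoc, h3, hms, hn, Nat.mul_comm]
      rw [h2, Nat.add_mod_right]
      simp
  -- Step C : gTbar has coefficients fixed by π
  have himg : ∀ i : ℕ, pmap π '' lIdeal θ (Xsub ((θ ^ i) β))
      = lIdeal θ (Xsub ((θ ^ (i + μ)) β)) := by
    intro i
    rw [← lIdeal_pmap θ π hcπ, pmap_Xsub, hexp]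
  have hpm : lIdeal θ (pmap π gTbar) = lIdeal θ gTbar := by
    rw [lIdeal_pmap θ π hcπ, hgTbargen,
      Set.image_iInter₂ (pmap_bijective π)]
    ext h
    simp only [Set.mem_iInter]
    constructor
    · intro hmem k hk
      obtain ⟨p, hp, rfl⟩ := Finset.mem_image.mp hk
      obtain ⟨hp1, hp2⟩ := Finset.mem_product.mp hp
      have hm2 : (p.2 + (s - 1)) % s < s := Nat.mod_lt _ hs
      have hk' : (p.1 + ((p.2 + (s - 1)) % s) * μ) % n ∈ Ibar :=
        Finset.mem_image.mpr ⟨(p.1, (p.2 + (s - 1)) % s),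
          Finset.mem_product.mpr ⟨hp1, Finset.mem_range.mpr hm2⟩, rfl⟩
      have h1 := hmem _ hk'
      rw [himg] at h1
      have hexp2 : (θ ^ ((p.1 + ((p.2 + (s - 1)) % s) * μ) % n + μ)) β
          = (θ ^ ((p.1 + p.2 * μ) % n)) β := by
        rw [← hpowmod ((p.1 + ((p.2 + (s - 1)) % s) * μ) % n + μ),
          harith1 p.1 p.2 (Finset.mem_range.mp hp2)]
      rwa [hexp2] at h1
    · intro hmem k hk
      rw [himg]
      obtain ⟨p, hp, rfl⟩ := Finset.mem_image.mp hk
      obtain ⟨hp1, hp2⟩ := Finset.mem_product.mp hp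
      have hnext : (p.1 + ((p.2 + 1) % s) * μ) % n ∈ Ibar :=
        Finset.mem_image.mpr ⟨(p.1, (p.2 + 1) % s),
          Finset.mem_product.mpr ⟨hp1, Finset.mem_range.mpr (Nat.mod_lt _ hs)⟩, rfl⟩
      have h1 := hmem _ hnext
      have hexp3 : (θ ^ ((p.1 + ((p.2 + 1) % s) * μ) % n)) β
          = (θ ^ ((p.1 + p.2 * μ) % n + μ)) β := by
        rw [← hpowmod ((p.1 + p.2 * μ) % n + μ),
          harith2 p.1 p.2 (Finset.mem_range.mp hp2)]
      rwa [hexp3] at h1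
  obtain ⟨d, hd⟩ := hgTbarM
  have heqp : pmap π gTbar = gTbar :=
    monic_gen_unique θ ⟨d, pmap_monicAt π hd⟩ ⟨d, hd⟩
      (hpm ▸ mem_lIdeal_self θ (pmap π gTbar)) (hpm ▸ mem_lIdeal_self θ gTbar)
  have hR : inR π gTbar := by
    intro j
    rw [← pmap_apply π gTbar j, heqp]
  -- Conclusion
  have hmemR : gTbar ∈ {h | ∃ q, inR π q ∧ h = sMul θ q gbar} := by
    rw [hgbargen]; exact ⟨hsub, hR⟩
  obtain ⟨r, _, hr⟩ := hmemR
  obtain ⟨q, hq⟩ := hgbar_mem_gTbar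
  obtain ⟨d2, hd2⟩ := hgbarM
  exact ⟨monic_mutual_eq θ hd hd2 hr hq, hR⟩
end

section
/- Let 2 ≤ δ ≤ n − 1 and let t be a positive integer with gcd(t, n) = 1. Set g = lclm(x − θ^{it}(β) : 0 ≤ i ≤ δ−2) ∈ S = M[x;θ]. Then g right-divides x^n − 1, deg g = δ − 1, and the M-linear code D ⊆ M^n consisting of the coefficient vectors of the polynomials of degree < n right-divisible by g has dimension n − δ + 1 and minimum Hamming distance exactly δ; in particular, D is an MDS code. -/
/-! Skew polynomials over a field `M` twisted by a ring automorphism `θ` (`x·a = θ(a)·x`),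
modeled as finitely supported functions `ℕ →₀ M` (coefficient of `xⁱ` at `i`),
with left-coefficient multiplication `(Σᵢ aᵢ xⁱ)·(Σⱼ bⱼ xʲ) = Σᵢⱼ aᵢ θⁱ(bⱼ) x^{i+j}`. -/

variable {M : Type*} [Field M]

namespace SkewAux

lemma aut_one_apply (a : M) : (1 : M ≃+* M) a = a := rfl

lemma aut_mul_apply (f g : M ≃+* M) (a : M) : (f * g) a = f (g a) := rfl

lemma aut_pow_succ_apply (σ : M ≃+* M) (j : ℕ) (x : M) :
    (σ ^ (j + 1)) x = σ ((σ ^ j) x) := by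
  rw [pow_succ']; rfl

lemma aut_pow_add_apply (θ : M ≃+* M) (i j : ℕ) (a : M) :
    (θ ^ (i + j)) a = (θ ^ i) ((θ ^ j) a) := by
  rw [pow_add]; rfl

/-- The "norm" sequence `N_0 = 1`, `N_{i+1} = θ^i(γ)·N_i`. -/
noncomputable def Nga (θ : M ≃+* M) (γ : M) : ℕ → M
  | 0 => 1
  | i + 1 => (θ ^ i) γ * Nga θ γ i

lemma Nga_zero (θ : M ≃+* M) (γ : M) : Nga θ γ 0 = 1 := rfl

lemma Nga_succ (θ : M ≃+* M) (γ : M) (i : ℕ) : Nga θ γ (i + 1) = (θ ^ i) γ * Nga θ γ i := rfl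

lemma sMul_zero_left (θ : M ≃+* M) (g : ℕ →₀ M) : sMul θ 0 g = 0 := by
  simp [sMul]

lemma sMul_add_left (θ : M ≃+* M) (f₁ f₂ g : ℕ →₀ M) :
    sMul θ (f₁ + f₂) g = sMul θ f₁ g + sMul θ f₂ g := by
  unfold sMul
  refine Finsupp.sum_add_index ?_ ?_
  · intro i _
    simp
  · intro i _ a₁ a₂
    rw [← Finsupp.sum_add]
    refine Finsupp.sum_congr fun j _ => ?_
    rw [add_mul, Finsupp.single_add]

lemma sMul_single_left (θ : M ≃+* M) (i : ℕ) (a : M) (g : ℕ →₀ M) :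
    sMul θ (Finsupp.single i a) g = g.sum fun j b => Finsupp.single (i + j) (a * (θ ^ i) b) := by
  unfold sMul
  refine Finsupp.sum_single_index ?_
  simp

lemma sMul_single_add_right (θ : M ≃+* M) (i : ℕ) (a : M) (g₁ g₂ : ℕ →₀ M) :
    sMul θ (Finsupp.single i a) (g₁ + g₂) =
      sMul θ (Finsupp.single i a) g₁ + sMul θ (Finsupp.single i a) g₂ := by
  rw [sMul_single_left, sMul_single_left, sMul_single_left]
  refine Finsupp.sum_add_index ?_ ?_
  · intro j _; simp
  · intro j _ b₁ b₂
    rw [map_add, mul_add, Finsupp.single_add]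

lemma sMul_single_single (θ : M ≃+* M) (i j : ℕ) (a b : M) :
    sMul θ (Finsupp.single i a) (Finsupp.single j b) = Finsupp.single (i + j) (a * (θ ^ i) b) := by
  rw [sMul_single_left]
  refine Finsupp.sum_single_index ?_
  simp

lemma sMul_one_left (θ : M ≃+* M) (g : ℕ →₀ M) : sMul θ (Finsupp.single 0 1) g = g := by
  rw [sMul_single_left]
  conv_rhs => rw [← Finsupp.sum_single g]
  refine Finsupp.sum_congr fun j _ => by simp [aut_one_apply]

/-- Evaluation against a weight function, as an additive hom. -/
noncomputable def EvalHom (w : ℕ → M) : (ℕ →₀ M) →+ M where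
  toFun f := f.sum fun i a => a * w i
  map_zero' := by simp
  map_add' f g := by
    exact Finsupp.sum_add_index' (fun i => by simp) (fun i a₁ a₂ => add_mul _ _ _)

lemma EvalHom_apply (w : ℕ → M) (f : ℕ →₀ M) :
    EvalHom w f = f.sum fun i a => a * w i := rfl

@[simp] lemma EvalHom_single (w : ℕ → M) (i : ℕ) (a : M) :
    EvalHom w (Finsupp.single i a) = a * w i := by
  rw [EvalHom_apply]
  exact Finsupp.sum_single_index (by simp)

lemma eval_sMul_Xsub (θ : M ≃+* M) (γ : M) (q : ℕ →₀ M) :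
    EvalHom (Nga θ γ) (sMul θ q (Xsub γ)) = 0 := by
  induction q using Finsupp.induction with
  | zero => rw [sMul_zero_left]; simp
  | single_add i a f _ _ ih =>
    rw [sMul_add_left, map_add, ih, add_zero]
    have hx : Xsub γ = Finsupp.single 1 1 + Finsupp.single 0 (-γ) := by
      rw [Xsub, Finsupp.single_neg, sub_eq_add_neg]
    rw [hx, sMul_single_add_right, map_add, sMul_single_single, sMul_single_single,
      EvalHom_single, EvalHom_single]
    simp only [map_one, mul_one, map_neg, add_zero, mul_neg]
    rw [Nga_succ]
    ring

lemma single_mem_lIdeal_Xsub (θ : M ≃+* M) (γ : M) (i : ℕ) (a : M) :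
    ∃ q, Finsupp.single i a = sMul θ q (Xsub γ) + Finsupp.single 0 (a * Nga θ γ i) := by
  induction i generalizing a with
  | zero =>
    exact ⟨0, by rw [sMul_zero_left, zero_add, Nga_zero, mul_one]⟩
  | succ i ih =>
    obtain ⟨q', hq'⟩ := ih (a * (θ ^ i) γ)
    refine ⟨Finsupp.single i a + q', ?_⟩
    have hx : Xsub γ = Finsupp.single 1 1 + Finsupp.single 0 (-γ) := by
      rw [Xsub, Finsupp.single_neg, sub_eq_add_neg]
    have h1 : sMul θ (Finsupp.single i a) (Xsub γ) =
        Finsupp.single (i + 1) a - Finsupp.single i (a * (θ ^ i) γ) := by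
      rw [hx, sMul_single_add_right, sMul_single_single, sMul_single_single]
      simp only [map_one, mul_one, map_neg, add_zero, mul_neg]
      rw [Finsupp.single_neg, sub_eq_add_neg]
    have hN : a * Nga θ γ (i + 1) = a * (θ ^ i) γ * Nga θ γ i := by
      rw [Nga_succ]; ring
    rw [sMul_add_left, h1, hN, add_assoc, ← hq', sub_add_cancel]

lemma mem_lIdeal_Xsub_iff (θ : M ≃+* M) (γ : M) (f : ℕ →₀ M) :
    f ∈ lIdeal θ (Xsub γ) ↔ EvalHom (Nga θ γ) f = 0 := by
  constructor
  · rintro ⟨q, rfl⟩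
    exact eval_sMul_Xsub θ γ q
  · intro hf
    have key : ∀ f : ℕ →₀ M, ∃ q, f = sMul θ q (Xsub γ) +
        Finsupp.single 0 (EvalHom (Nga θ γ) f) := by
      intro f
      induction f using Finsupp.induction with
      | zero => exact ⟨0, by rw [sMul_zero_left]; simp⟩
      | single_add i a f _ _ ih =>
        obtain ⟨q₁, hq₁⟩ := single_mem_lIdeal_Xsub θ γ i a
        obtain ⟨q₂, hq₂⟩ := ih
        refine ⟨q₁ + q₂, ?_⟩
        rw [map_add, EvalHom_single, Finsupp.single_add, sMul_add_left]
        conv_lhs => rw [hq₁, hq₂]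
        abel
    obtain ⟨q, hq⟩ := key f
    rw [hf, Finsupp.single_zero, add_zero] at hq
    exact ⟨q, hq⟩

/-- Artin/Moore induction. -/
lemma moore {ι : Type*} [DecidableEq ι] (σ : M ≃+* M) (γ : ι → M) :
    ∀ s : Finset ι,
      (∀ s' ⊆ s, ∀ u : ι → M, (∀ i ∈ s', σ (u i) = u i) →
        ∑ i ∈ s', u i * γ i = 0 → ∀ i ∈ s', u i = 0) →
      ∀ c : ι → M, (∀ j < s.card, ∑ i ∈ s, c i * (σ ^ j) (γ i) = 0) →
      ∀ i ∈ s, c i = 0 := by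
  intro s
  induction s using Finset.strongInductionOn with
  | _ s IH =>
    intro hind c hc
    by_contra hne
    push_neg at hne
    obtain ⟨i0, hi0, hci0⟩ := hne
    set u : ι → M := fun i => c i * (c i0)⁻¹ with hu
    have hu0 : u i0 = 1 := by rw [hu]; exact mul_inv_cancel₀ hci0
    have hceq : ∀ j < s.card, ∑ i ∈ s, u i * (σ ^ j) (γ i) = 0 := by
      intro j hj
      calc ∑ i ∈ s, u i * (σ ^ j) (γ i)
          = (∑ i ∈ s, c i * (σ ^ j) (γ i)) * (c i0)⁻¹ := by
            rw [Finset.sum_mul]; exact Finset.sum_congr rfl fun i _ => by ring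
        _ = 0 := by rw [hc j hj, zero_mul]
    set s' := s.erase i0 with hs'
    have hss' : s' ⊂ s := Finset.erase_ssubset hi0
    have hcard : s'.card + 1 = s.card := Finset.card_erase_add_one hi0
    set d : ι → M := fun i => σ.symm (u i - σ (u i)) with hd
    have hd0 : ∀ j < s'.card, ∑ i ∈ s', d i * (σ ^ j) (γ i) = 0 := by
      intro j hj
      have h1 : ∑ i ∈ s, u i * (σ ^ (j + 1)) (γ i) = 0 := hceq (j + 1) (by omega)
      have h2 : ∑ i ∈ s, σ (u i) * (σ ^ (j + 1)) (γ i) = 0 := by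
        have h3 := congrArg σ (hceq j (by omega))
        rw [map_sum, map_zero] at h3
        calc ∑ i ∈ s, σ (u i) * (σ ^ (j + 1)) (γ i)
            = ∑ i ∈ s, σ (u i * (σ ^ j) (γ i)) := by
              refine Finset.sum_congr rfl fun i _ => ?_
              rw [aut_pow_succ_apply]
              exact (map_mul σ _ _).symm
          _ = 0 := h3
      have h4 : ∑ i ∈ s, (u i - σ (u i)) * (σ ^ (j + 1)) (γ i) = 0 := by
        rw [show (fun i => (u i - σ (u i)) * (σ ^ (j + 1)) (γ i)) =
          (fun i => u i * (σ ^ (j + 1)) (γ i) - σ (u i) * (σ ^ (j + 1)) (γ i)) from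
          funext fun i => by ring, Finset.sum_sub_distrib, h1, h2, sub_zero]
      have h5 : ∑ i ∈ s', (u i - σ (u i)) * (σ ^ (j + 1)) (γ i) = 0 := by
        rw [← h4]
        refine Finset.sum_subset (Finset.erase_subset _ _) ?_
        intro i hi hni
        have : i = i0 := by
          by_contra hne'
          exact hni (Finset.mem_erase.mpr ⟨hne', hi⟩)
        subst this
        rw [hu0, map_one, sub_self, zero_mul]
      have h6 := congrArg σ.symm h5
      rw [map_sum, map_zero] at h6
      rw [← h6]
      refine Finset.sum_congr rfl fun i _ => ?_
      rw [map_mul, hd, aut_pow_succ_apply, RingEquiv.symm_apply_apply]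
    have hdz : ∀ i ∈ s', d i = 0 :=
      IH s' hss' (fun t ht => hind t (ht.trans (Finset.erase_subset _ _))) d hd0
    have hufix : ∀ i ∈ s, σ (u i) = u i := by
      intro i hi
      by_cases hii : i = i0
      · subst hii; rw [hu0, map_one]
      · have h8 := hdz i (Finset.mem_erase.mpr ⟨hii, hi⟩)
        rw [hd] at h8
        have h7 : u i - σ (u i) = 0 := by
          have := congrArg σ h8
          rwa [RingEquiv.apply_symm_apply, map_zero] at this
        exact (sub_eq_zero.mp h7).symm
    have h0 : ∑ i ∈ s, u i * γ i = 0 := by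
      have := hceq 0 (by omega)
      simpa using this
    have := hind s (subset_refl s) u hufix h0 i0 hi0
    rw [hu0] at this
    exact one_ne_zero this

lemma fixed_of_pow_fixed (σ : M ≃+* M) (k : ℕ) (a : M) (h : σ a = a) : (σ ^ k) a = a := by
  induction k with
  | zero => rfl
  | succ k ih => rw [pow_succ', aut_mul_apply, ih, h]

lemma fixed_of_coprime_pow (θ : M ≃+* M) (n t : ℕ) (hn1 : 1 < n) (hord : orderOf θ = n)
    (hgcd : Nat.gcd t n = 1) (a : M) (h : (θ ^ t) a = a) : θ a = a := by
  obtain ⟨t', -, ht'⟩ := Nat.exists_mul_mod_eq_one_of_coprime hgcd hn1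
  have hpow : θ ^ (t * t') = θ := by
    have : θ ^ (t * t') = θ ^ 1 := by
      rw [pow_eq_pow_iff_modEq, hord]
      show t * t' % n = 1 % n
      rw [ht', Nat.mod_eq_of_lt hn1]
    rwa [pow_one] at this
  calc θ a = (θ ^ (t * t')) a := by rw [hpow]
    _ = ((θ ^ t) ^ t') a := by rw [pow_mul]
    _ = a := fixed_of_pow_fixed _ _ _ h

/-- The unbundled independence statement for the normal basis, over `ℕ` indices `< n`. -/
lemma hindNat (θ : M ≃+* M) (n : ℕ) (α : M)
    (hli : LinearIndependent (fixedSubfield θ) (fun i : Fin n => (θ ^ (i : ℕ)) α)) :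
    ∀ s : Finset ℕ, (∀ i ∈ s, i < n) → ∀ u : ℕ → M, (∀ i ∈ s, θ (u i) = u i) →
      ∑ i ∈ s, u i * (θ ^ i) α = 0 → ∀ i ∈ s, u i = 0 := by
  classical
  intro s hs u hufix hsum i hi
  set gK : Fin n → fixedSubfield θ :=
    fun k => if h : θ (u (k : ℕ)) = u (k : ℕ) then ⟨u (k : ℕ), h⟩ else 0 with hgK
  set sF : Finset (Fin n) := s.attachFin hs with hsF
  have hmem : ∀ k : Fin n, k ∈ sF ↔ (k : ℕ) ∈ s := fun k => Finset.mem_attachFin hs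
  have htrans : ∑ k ∈ sF, gK k • (θ ^ (k : ℕ)) α = 0 := by
    have : ∑ k ∈ sF, gK k • (θ ^ (k : ℕ)) α = ∑ i ∈ s, u i * (θ ^ i) α := by
      refine Finset.sum_bij (fun (k : Fin n) (_ : k ∈ sF) => (k : ℕ)) ?_ ?_ ?_ ?_
      · intro k hk; exact (hmem k).mp hk
      · intro k₁ hk₁ k₂ hk₂ h; exact Fin.val_injective h
      · intro b hb; exact ⟨⟨b, hs b hb⟩, (hmem _).mpr hb, rfl⟩
      · intro k hk
        have hfix := hufix (k : ℕ) ((hmem k).mp hk)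
        rw [hgK]
        simp only [dif_pos hfix]
        rw [Subfield.smul_def]
        rfl
    rw [this, hsum]
  have hz := linearIndependent_iff'.mp hli sF gK htrans ⟨i, hs i hi⟩ ((hmem _).mpr hi)
  have hfix := hufix i hi
  have : (gK ⟨i, hs i hi⟩ : M) = u i := by rw [hgK]; simp only [dif_pos hfix]
  rw [hz] at this
  exact this.symm ▸ rfl

lemma pow_ne_zero_of_ne_zero (θ : M ≃+* M) (k : ℕ) {α : M} (hα : α ≠ 0) : (θ ^ k) α ≠ 0 := by
  intro h
  exact hα (by simpa using (θ ^ k).injective (h.trans (map_zero (θ ^ k)).symm))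

lemma Nga_normal (θ : M ≃+* M) (α : M) (hα : α ≠ 0) (m i : ℕ) :
    Nga θ ((θ ^ m) (α⁻¹ * θ α)) i = ((θ ^ m) α)⁻¹ * (θ ^ (i + m)) α := by
  induction i with
  | zero =>
    rw [Nga_zero, zero_add, inv_mul_cancel₀ (pow_ne_zero_of_ne_zero θ m hα)]
  | succ i ih =>
    rw [Nga_succ, ih]
    have h1 : (θ ^ i) ((θ ^ m) (α⁻¹ * θ α)) = ((θ ^ (i + m)) α)⁻¹ * (θ ^ (i + m + 1)) α := by
      have h0 : (θ ^ (i + m + 1)) α = (θ ^ (i + m)) (θ α) := by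
        rw [pow_succ, aut_mul_apply]
      rw [← aut_pow_add_apply, map_mul, map_inv₀, h0]
    rw [h1]
    have h2 : (θ ^ (i + m)) α ≠ 0 := pow_ne_zero_of_ne_zero θ _ hα
    have h3 : i + 1 + m = i + m + 1 := by omega
    rw [h3]
    field_simp

lemma sMul_apply_top (θ : M ≃+* M) (q g : ℕ →₀ M) (e dg : ℕ)
    (hq : ∀ i, e < i → q i = 0) (hg : ∀ j, dg < j → g j = 0) :
    sMul θ q g (e + dg) = q e * (θ ^ e) (g dg) := by
  classical
  have happ : sMul θ q g (e + dg) =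
      ∑ i ∈ q.support, ∑ j ∈ g.support,
        if i + j = e + dg then q i * (θ ^ i) (g j) else 0 := by
    rw [sMul, Finsupp.sum_apply]
    unfold Finsupp.sum
    refine Finset.sum_congr rfl fun i _ => ?_
    dsimp only
    rw [Finsupp.finset_sum_apply]
    refine Finset.sum_congr rfl fun j _ => ?_
    exact Finsupp.single_apply
  rw [happ]
  have hqs : ∀ i ∈ q.support, i ≤ e := by
    intro i hi
    by_contra h
    exact Finsupp.mem_support_iff.mp hi (hq i (by omega))
  have hgs : ∀ j ∈ g.support, j ≤ dg := by
    intro j hj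
    by_contra h
    exact Finsupp.mem_support_iff.mp hj (hg j (by omega))
  have hinner : ∀ i ∈ q.support,
      (∑ j ∈ g.support, if i + j = e + dg then q i * (θ ^ i) (g j) else 0) =
      if i = e then q e * (θ ^ e) (g dg) else 0 := by
    intro i hi
    by_cases hie : i = e
    · subst hie
      rw [if_pos rfl]
      rw [Finset.sum_eq_single dg]
      · rw [if_pos rfl]
      · intro j hj hjne
        rw [if_neg (by omega)]
      · intro hdg
        have : g dg = 0 := Finsupp.notMem_support_iff.mp hdg
        rw [this, map_zero, mul_zero, if_pos rfl]
    · rw [if_neg hie]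
      refine Finset.sum_eq_zero fun j hj => ?_
      have h1 : i ≤ e := hqs i hi
      have h2 : j ≤ dg := hgs j hj
      rw [if_neg (by omega)]
  rw [Finset.sum_congr rfl hinner]
  by_cases he : e ∈ q.support
  · rw [Finset.sum_eq_single e]
    · rw [if_pos rfl]
    · intro i _ hine; rw [if_neg hine]
    · intro h; exact absurd he h
  · have : q e = 0 := Finsupp.notMem_support_iff.mp he
    rw [this, zero_mul]
    refine Finset.sum_eq_zero fun i hi => ?_
    by_cases hie : i = e
    · subst hie; exact absurd hi he
    · rw [if_neg hie]

end SkewAux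

open SkewAux in
/-- Setting: `θ` an automorphism of `M` of finite order `n` with
`K = M^θ`, `α` generating a normal basis of `M/K` and `β = α⁻¹θ(α)`. Let `2 ≤ δ ≤ n - 1` and
`t > 0` with `gcd(t, n) = 1`, and let `g = lclm(x - θ^{it}(β) : 0 ≤ i ≤ δ-2)` in `S = M[x;θ]`.
Then `g` right-divides `xⁿ - 1`, `deg g = δ - 1` (with `g` monic), and the `M`-linear code
`D ⊆ Mⁿ` of coefficient vectors of polynomials of degree `< n` right-divisible by `g` has
dimension `n - δ + 1` and minimum Hamming distance exactly `δ`; in particular `D` is MDS. -/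
theorem skew_rs_code_is_mds {M : Type*} [Field M] (θ : M ≃+* M) (n : ℕ) (hn : 0 < n)
    (hord : orderOf θ = n)
    (α : M) (hα : NormalBasis θ n α) (β : M) (hβ : β = α⁻¹ * θ α)
    (δ t : ℕ) (hδ : 2 ≤ δ) (hδn : δ ≤ n - 1) (ht : 0 < t) (hgcd : Nat.gcd t n = 1)
    (g : ℕ →₀ M) (hgM : IsMonic g)
    (hggen : lIdeal θ g = ⋂ i ∈ Finset.range (δ - 1), lIdeal θ (Xsub ((θ ^ (i * t)) β))) :
    rdvd θ g (XnSubOne n) ∧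
    IsMonicAt g (δ - 1) ∧
    (∀ D : Submodule M (Fin n → M),
      (D : Set (Fin n → M)) = {c | rdvd θ g (vecPoly c)} →
        Module.finrank M D = n - δ + 1) ∧
    (∀ c : Fin n → M, rdvd θ g (vecPoly c) → c ≠ 0 → δ ≤ hWt c) ∧
    (∃ c : Fin n → M, rdvd θ g (vecPoly c) ∧ c ≠ 0 ∧ hWt c = δ) := by
  classical
  have hn3 : 3 ≤ n := by omega
  have hα0 : α ≠ 0 := by
    have := hα.1.ne_zero ⟨0, by omega⟩
    simpa [aut_one_apply] using this
  -- the weight functions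
  set w : ℕ → ℕ → M := fun j i => (θ ^ (i + j * t)) α with hw
  have hwσ : ∀ j i, w j i = ((θ ^ t) ^ j) ((θ ^ i) α) := by
    intro j i
    rw [hw]
    show (θ ^ (i + j * t)) α = ((θ ^ t) ^ j) ((θ ^ i) α)
    rw [← pow_mul, ← aut_pow_add_apply, show t * j + i = i + j * t from by ring]
  -- membership characterization
  have hchar : ∀ f : ℕ →₀ M, rdvd θ g f ↔ ∀ j < δ - 1, EvalHom (w j) f = 0 := by
    intro f
    have h1 : rdvd θ g f ↔ ∀ j < δ - 1, f ∈ lIdeal θ (Xsub ((θ ^ (j * t)) β)) := by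
      rw [rdvd, hggen]
      simp only [Set.mem_iInter, Finset.mem_range]
    rw [h1]
    refine forall₂_congr fun j hj => ?_
    rw [mem_lIdeal_Xsub_iff]
    have hNeq : Nga θ ((θ ^ (j * t)) β) = fun i => ((θ ^ (j * t)) α)⁻¹ * w j i := by
      funext i
      rw [hβ, Nga_normal θ α hα0 (j * t) i, hw]
    have hfac : EvalHom (Nga θ ((θ ^ (j * t)) β)) f = ((θ ^ (j * t)) α)⁻¹ * EvalHom (w j) f := by
      rw [hNeq, EvalHom_apply, EvalHom_apply, Finsupp.mul_sum]
      exact Finsupp.sum_congr fun i _ => by ring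
    rw [hfac]
    constructor
    · intro h
      rcases mul_eq_zero.mp h with h' | h'
      · exact absurd h' (inv_ne_zero (pow_ne_zero_of_ne_zero θ _ hα0))
      · exact h'
    · intro h; rw [h, mul_zero]
  -- Part 1 : g right-divides xⁿ - 1
  have part1 : rdvd θ g (XnSubOne n) := by
    rw [hchar]
    intro j hj
    rw [XnSubOne, map_sub, EvalHom_single, EvalHom_single, one_mul, one_mul]
    have : w j n = w j 0 := by
      rw [hw]
      show (θ ^ (n + j * t)) α = (θ ^ (0 + j * t)) α
      rw [aut_pow_add_apply, aut_pow_add_apply, ← hord, pow_orderOf_eq_one]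
      rfl
    rw [this, sub_self]
  -- Moore instantiation over ℕ
  have mooreNat : ∀ (s : Finset ℕ), (∀ i ∈ s, i < n) → s.card ≤ δ - 1 →
      ∀ c : ℕ → M, (∀ j < δ - 1, ∑ i ∈ s, c i * w j i = 0) → ∀ i ∈ s, c i = 0 := by
    intro s hs hcard c hc
    refine moore (θ ^ t) (fun i : ℕ => (θ ^ i) α) s ?_ c ?_
    · intro s' hs' u hufix hsum
      refine hindNat θ n α hα.1 s' (fun i hi => hs i (hs' hi)) u ?_ hsum
      intro i hi
      exact fixed_of_coprime_pow θ n t (by omega) hord hgcd (u i) (hufix i hi)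
    · intro j hj
      have := hc j (by omega)
      rw [← this]
      refine Finset.sum_congr rfl fun i _ => ?_
      rw [hwσ]
  -- Moore instantiation over Fin n
  have mooreFin : ∀ (s : Finset (Fin n)), s.card ≤ δ - 1 →
      ∀ c : Fin n → M, (∀ j < δ - 1, ∑ i ∈ s, c i * w j (i : ℕ) = 0) → ∀ i ∈ s, c i = 0 := by
    intro s hcard c hc i hi
    set emb : Fin n ↪ ℕ := ⟨Fin.val, Fin.val_injective⟩ with hemb
    set sN : Finset ℕ := s.map emb with hsN
    set cN : ℕ → M := fun m => if h : m < n then c ⟨m, h⟩ else 0 with hcN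
    have hcNval : ∀ k : Fin n, cN (k : ℕ) = c k := by
      intro k
      rw [hcN]
      simp only [dif_pos k.isLt, Fin.eta]
    have h1 : ∀ i' ∈ sN, i' < n := by
      intro i' hi'
      obtain ⟨k, _, rfl⟩ := Finset.mem_map.mp hi'
      exact k.isLt
    have h2 : sN.card = s.card := Finset.card_map emb
    have h3 : ∀ j < δ - 1, ∑ i' ∈ sN, cN i' * w j i' = 0 := by
      intro j hj
      rw [hsN, Finset.sum_map]
      rw [← hc j hj]
      refine Finset.sum_congr rfl fun k _ => ?_
      show cN (k : ℕ) * w j (k : ℕ) = c k * w j (k : ℕ)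
      rw [hcNval]
    have := mooreNat sN h1 (by omega) cN h3 (i : ℕ) (Finset.mem_map.mpr ⟨i, hi, rfl⟩)
    rwa [hcNval] at this
  -- Part 2 : g is monic of degree δ - 1
  obtain ⟨dg, hgd1, hgd2⟩ := hgM
  -- lower bound
  have hglow : δ - 1 ≤ dg := by
    by_contra hlt
    push_neg at hlt
    have hgsupp : ∀ i ∈ g.support, i < n := by
      intro i hi
      have := Finsupp.mem_support_iff.mp hi
      by_contra h
      exact this (hgd2 i (by omega))
    have hgcard : g.support.card ≤ δ - 1 := by
      have hsub : g.support ⊆ Finset.range (dg + 1) := by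
        intro i hi
        rw [Finset.mem_range]
        by_contra h
        exact Finsupp.mem_support_iff.mp hi (hgd2 i (by omega))
      calc g.support.card ≤ (Finset.range (dg + 1)).card := Finset.card_le_card hsub
        _ = dg + 1 := Finset.card_range _
        _ ≤ δ - 1 := by omega
    have hgmem : rdvd θ g g := ⟨Finsupp.single 0 1, (sMul_one_left θ g).symm⟩
    have hev : ∀ j < δ - 1, ∑ i ∈ g.support, g i * w j i = 0 := by
      intro j hj
      have := (hchar g).mp hgmem j hj
      rwa [EvalHom_apply] at this
    have := mooreNat g.support hgsupp hgcard g hev dg (Finsupp.mem_support_iff.mpr (by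
      rw [hgd1]; exact one_ne_zero))
    rw [hgd1] at this
    exact one_ne_zero this
  -- invertibility of the small square system
  have hδ1n : δ - 1 ≤ n := by omega
  have hδn' : δ ≤ n := by omega
  -- the main parity-check matrix
  set A : Matrix (Fin (δ - 1)) (Fin n) M := Matrix.of fun j i => w (j : ℕ) (i : ℕ) with hA
  set L : (Fin n → M) →ₗ[M] (Fin (δ - 1) → M) := A.mulVecLin with hL
  have hLapply : ∀ (c : Fin n → M) (j : Fin (δ - 1)),
      L c j = ∑ i : Fin n, w (j : ℕ) (i : ℕ) * c i := by
    intro c j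
    rw [hL, Matrix.mulVecLin_apply]
    rfl
  -- extension-by-zero sums
  have hextsum : ∀ (m : ℕ) (hm : m ≤ n) (d : Fin m → M) (F : Fin n → M),
      ∑ k : Fin n, (if h : (k : ℕ) < m then d ⟨(k : ℕ), h⟩ else 0) * F k =
      ∑ i : Fin m, d i * F (Fin.castLE hm i) := by
    intro m hm d F
    symm
    rw [show (∑ i : Fin m, d i * F (Fin.castLE hm i)) =
        ∑ k ∈ Finset.univ.map (Fin.castLEEmb hm),
          (if h : (k : ℕ) < m then d ⟨(k : ℕ), h⟩ else 0) * F k by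
      rw [Finset.sum_map]
      refine Finset.sum_congr rfl fun i _ => ?_
      simp]
    refine Finset.sum_subset (Finset.subset_univ _) ?_
    intro k _ hk
    have hnlt : ¬ ((k : ℕ) < m) := by
      intro hlt
      exact hk (Finset.mem_map.mpr ⟨⟨(k : ℕ), hlt⟩, Finset.mem_univ _, by
        apply Fin.ext
        simp⟩)
    rw [dif_neg hnlt, zero_mul]
  -- membership in terms of L
  have hker : ∀ c : Fin n → M, rdvd θ g (vecPoly c) ↔ L c = 0 := by
    intro c
    rw [hchar]
    have hEvp : ∀ j, EvalHom (w j) (vecPoly c) = ∑ i : Fin n, c i * w j (i : ℕ) := by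
      intro j
      rw [vecPoly, map_sum]
      refine Finset.sum_congr rfl fun i _ => EvalHom_single _ _ _
    constructor
    · intro h
      funext j
      rw [hLapply, Pi.zero_apply]
      have := h (j : ℕ) j.isLt
      rw [hEvp] at this
      rw [← this]
      exact Finset.sum_congr rfl fun i _ => mul_comm _ _
    · intro h j hj
      rw [hEvp]
      have := congrFun h ⟨j, hj⟩
      rw [hLapply, Pi.zero_apply] at this
      rw [← this]
      exact Finset.sum_congr rfl fun i _ => mul_comm _ _
  -- the square subsystem on the first δ-1 coordinates
  set A0 : Matrix (Fin (δ - 1)) (Fin (δ - 1)) M :=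
    Matrix.of fun j i => w (j : ℕ) ((Fin.castLE hδ1n i : Fin n) : ℕ) with hA0
  set L0 : (Fin (δ - 1) → M) →ₗ[M] (Fin (δ - 1) → M) := A0.mulVecLin with hL0
  have hL0inj : Function.Injective L0 := by
    rw [← LinearMap.ker_eq_bot]
    rw [Submodule.eq_bot_iff]
    intro d hd
    rw [LinearMap.mem_ker] at hd
    set s : Finset (Fin n) := Finset.univ.map (Fin.castLEEmb hδ1n) with hs
    set cN : Fin n → M := fun k => if h : (k : ℕ) < δ - 1 then d ⟨(k : ℕ), h⟩ else 0 with hcN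
    have hcs : ∀ j < δ - 1, ∑ i ∈ s, cN i * w j (i : ℕ) = 0 := by
      intro j hj
      rw [hs, Finset.sum_map]
      have := congrFun hd ⟨j, hj⟩
      rw [hL0, Matrix.mulVecLin_apply, Pi.zero_apply] at this
      rw [← this]
      show _ = ∑ i, A0 ⟨j, hj⟩ i * d i
      refine Finset.sum_congr rfl fun i _ => ?_
      rw [hcN, hA0]
      simp only [Matrix.of_apply, Fin.castLEEmb_apply, Fin.coe_castLE, Fin.is_lt,
        dite_eq_ite, dif_pos i.isLt, Fin.eta]
      simp [mul_comm]
    have hcard : s.card ≤ δ - 1 := by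
      rw [hs, Finset.card_map, Finset.card_univ, Fintype.card_fin]
    have hz := mooreFin s hcard cN hcs
    funext i
    have hmem : (Fin.castLE hδ1n i : Fin n) ∈ s :=
      Finset.mem_map.mpr ⟨i, Finset.mem_univ _, rfl⟩
    have hthis := hz _ hmem
    rw [hcN] at hthis
    simp only [Fin.coe_castLE, Fin.is_lt, dif_pos i.isLt, Fin.eta] at hthis
    rw [Pi.zero_apply]
    exact hthis
  have hL0surj : Function.Surjective L0 := LinearMap.injective_iff_surjective.mp hL0inj
  have hL0apply : ∀ (d : Fin (δ - 1) → M) (j : Fin (δ - 1)),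
      L0 d j = ∑ i : Fin (δ - 1), d i * w (j : ℕ) (i : ℕ) := by
    intro d j
    rw [hL0, Matrix.mulVecLin_apply]
    show ∑ i, A0 j i * d i = _
    refine Finset.sum_congr rfl fun i _ => ?_
    rw [hA0]
    simp only [Matrix.of_apply, Fin.coe_castLE]
    exact mul_comm _ _
  -- surjectivity of L
  have hLsurj : Function.Surjective L := by
    intro y
    obtain ⟨d, hd⟩ := hL0surj y
    refine ⟨fun k => if h : (k : ℕ) < δ - 1 then d ⟨(k : ℕ), h⟩ else 0, ?_⟩
    funext j
    rw [hLapply]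
    have hdj := congrFun hd j
    rw [hL0apply] at hdj
    rw [← hdj]
    calc ∑ i : Fin n, w (j : ℕ) (i : ℕ) * (if h : (i : ℕ) < δ - 1 then d ⟨(i : ℕ), h⟩ else 0)
        = ∑ i : Fin n, (if h : (i : ℕ) < δ - 1 then d ⟨(i : ℕ), h⟩ else 0) * w (j : ℕ) (i : ℕ) :=
          Finset.sum_congr rfl fun i _ => mul_comm _ _
      _ = ∑ i : Fin (δ - 1), d i * w (j : ℕ) ((Fin.castLE hδ1n i : Fin n) : ℕ) :=
          hextsum (δ - 1) hδ1n d (fun k => w (j : ℕ) (k : ℕ))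
      _ = ∑ i : Fin (δ - 1), d i * w (j : ℕ) (i : ℕ) := by
          refine Finset.sum_congr rfl fun i _ => ?_
          rw [Fin.coe_castLE]
  -- Part 4 : minimum distance ≥ δ
  have part4 : ∀ c : Fin n → M, rdvd θ g (vecPoly c) → c ≠ 0 → δ ≤ hWt c := by
    intro c hc hc0
    by_contra hlt
    push_neg at hlt
    set s : Finset (Fin n) := Finset.univ.filter (fun j => c j ≠ 0) with hs
    have hwt : hWt c = s.card := by
      rw [hWt]
      have : {j : Fin n | c j ≠ 0} = (s : Set (Fin n)) := by
        ext j
        simp [hs]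
      rw [this, Set.ncard_coe_finset]
    have hcard : s.card ≤ δ - 1 := by omega
    have hceq : ∀ j < δ - 1, ∑ i ∈ s, c i * w j (i : ℕ) = 0 := by
      intro j hj
      have := (hchar (vecPoly c)).mp hc j hj
      rw [vecPoly, map_sum] at this
      have h2 : ∑ i : Fin n, c i * w j (i : ℕ) = 0 := by
        rw [← this]
        exact Finset.sum_congr rfl fun i _ => (EvalHom_single _ _ _).symm
      rw [← h2]
      refine Finset.sum_subset (Finset.filter_subset _ _) ?_
      intro i _ hi
      have : c i = 0 := by
        by_contra h
        exact hi (Finset.mem_filter.mpr ⟨Finset.mem_univ _, h⟩)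
      rw [this, zero_mul]
    have hz := mooreFin s hcard c hceq
    apply hc0
    funext i
    rw [Pi.zero_apply]
    by_cases hi : i ∈ s
    · exact hz i hi
    · by_contra h
      exact hi (Finset.mem_filter.mpr ⟨Finset.mem_univ _, h⟩)
  -- Part 2 : g is monic of degree δ - 1
  have part2 : IsMonicAt g (δ - 1) := by
    have hghigh : dg ≤ δ - 1 := by
      -- construct a monic polynomial of degree δ - 1 in the ideal
      obtain ⟨d, hd⟩ := hL0surj (fun j => - w (j : ℕ) (δ - 1))
      set p : ℕ →₀ M :=
        Finsupp.single (δ - 1) 1 + ∑ i : Fin (δ - 1), Finsupp.single (i : ℕ) (d i) with hp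
      have hphigh : ∀ k, δ - 1 < k → p k = 0 := by
        intro k hk
        rw [hp, Finsupp.add_apply, Finsupp.finset_sum_apply]
        rw [Finsupp.single_apply, if_neg (by omega)]
        rw [zero_add]
        refine Finset.sum_eq_zero fun i _ => ?_
        rw [Finsupp.single_apply, if_neg (by have := i.isLt; omega)]
      have hptop : p (δ - 1) = 1 := by
        rw [hp, Finsupp.add_apply, Finsupp.finset_sum_apply]
        rw [Finsupp.single_apply, if_pos rfl]
        have : ∑ i : Fin (δ - 1), (Finsupp.single (i : ℕ) (d i)) (δ - 1) = 0 := by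
          refine Finset.sum_eq_zero fun i _ => ?_
          rw [Finsupp.single_apply, if_neg (by have := i.isLt; omega)]
        rw [this, add_zero]
      have hpev : ∀ j < δ - 1, EvalHom (w j) p = 0 := by
        intro j hj
        rw [hp, map_add, map_sum, EvalHom_single, one_mul]
        have h1 : ∑ i : Fin (δ - 1), EvalHom (w j) (Finsupp.single (i : ℕ) (d i)) =
            ∑ i : Fin (δ - 1), d i * w j (i : ℕ) :=
          Finset.sum_congr rfl fun i _ => EvalHom_single _ _ _
        rw [h1]
        have h2 := congrFun hd ⟨j, hj⟩
        rw [hL0apply] at h2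
        rw [h2]
        ring
      have hpdvd : rdvd θ g p := (hchar p).mpr hpev
      obtain ⟨q, hq⟩ := hpdvd
      have hq0 : q ≠ 0 := by
        intro h
        rw [h, sMul_zero_left] at hq
        rw [hq] at hptop
        simp at hptop
      have hsupp : q.support.Nonempty := Finsupp.support_nonempty_iff.mpr hq0
      set e : ℕ := q.support.max' hsupp with he
      have hqe : ∀ i, e < i → q i = 0 := by
        intro i hi
        by_contra h
        have : i ∈ q.support := Finsupp.mem_support_iff.mpr h
        have := Finset.le_max' q.support i this
        omega
      have hqene : q e ≠ 0 := Finsupp.mem_support_iff.mp (q.support.max'_mem hsupp)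
      have htop := sMul_apply_top θ q g e dg hqe hgd2
      rw [hgd1, map_one, mul_one] at htop
      have hpne : p (e + dg) ≠ 0 := by
        rw [hq, htop]
        exact hqene
      by_contra hcon
      push_neg at hcon
      exact hpne (hphigh (e + dg) (by omega))
    have : dg = δ - 1 := le_antisymm hghigh hglow
    rw [← this]
    exact ⟨hgd1, hgd2⟩
  -- Part 3 : dimension
  have part3 : ∀ D : Submodule M (Fin n → M),
      (D : Set (Fin n → M)) = {c | rdvd θ g (vecPoly c)} →
        Module.finrank M D = n - δ + 1 := by
    intro D hD
    have hDker : D = LinearMap.ker L := by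
      refine Submodule.ext fun c => ?_
      rw [LinearMap.mem_ker, ← hker c]
      change c ∈ (D : Set (Fin n → M)) ↔ _
      rw [hD]
      rfl
    have hrank := LinearMap.finrank_range_add_finrank_ker L
    rw [LinearMap.range_eq_top.mpr hLsurj] at hrank
    rw [finrank_top] at hrank
    rw [Module.finrank_pi, Module.finrank_pi, Fintype.card_fin, Fintype.card_fin] at hrank
    rw [hDker]
    omega
  -- Part 5 : a codeword of weight exactly δ
  have part5 : ∃ c : Fin n → M, rdvd θ g (vecPoly c) ∧ c ≠ 0 ∧ hWt c = δ := by
    set A1 : Matrix (Fin (δ - 1)) (Fin δ) M :=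
      Matrix.of fun j i => w (j : ℕ) ((Fin.castLE hδn' i : Fin n) : ℕ) with hA1
    set L1 : (Fin δ → M) →ₗ[M] (Fin (δ - 1) → M) := A1.mulVecLin with hL1
    have hL1apply : ∀ (d : Fin δ → M) (j : Fin (δ - 1)),
        L1 d j = ∑ i : Fin δ, d i * w (j : ℕ) (i : ℕ) := by
      intro d j
      rw [hL1, Matrix.mulVecLin_apply]
      show ∑ i, A1 j i * d i = _
      refine Finset.sum_congr rfl fun i _ => ?_
      rw [hA1]
      simp only [Matrix.of_apply, Fin.coe_castLE]
      exact mul_comm _ _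
    have hL1ninj : ¬ Function.Injective L1 := by
      intro hinj
      have := LinearMap.finrank_le_finrank_of_injective hinj
      rw [Module.finrank_pi, Module.finrank_pi, Fintype.card_fin, Fintype.card_fin] at this
      omega
    have hkerne : LinearMap.ker L1 ≠ ⊥ := by
      intro h
      exact hL1ninj (LinearMap.ker_eq_bot.mp h)
    obtain ⟨d, hdker, hd0⟩ := (Submodule.ne_bot_iff (LinearMap.ker L1)).mp hkerne
    rw [LinearMap.mem_ker] at hdker
    set c : Fin n → M := fun k => if h : (k : ℕ) < δ then d ⟨(k : ℕ), h⟩ else 0 with hc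
    have hcsub : ∀ i : Fin δ, c (Fin.castLE hδn' i) = d i := by
      intro i
      rw [hc]
      simp only [Fin.coe_castLE, Fin.is_lt, dif_pos i.isLt, Fin.eta]
      simp
    have hcd : rdvd θ g (vecPoly c) := by
      rw [hker]
      funext j
      rw [hLapply, Pi.zero_apply]
      have hdj := congrFun hdker j
      rw [hL1apply, Pi.zero_apply] at hdj
      rw [← hdj]
      calc ∑ i : Fin n, w (j : ℕ) (i : ℕ) * c i
          = ∑ i : Fin n, c i * w (j : ℕ) (i : ℕ) :=
            Finset.sum_congr rfl fun i _ => mul_comm _ _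
        _ = ∑ i : Fin δ, d i * w (j : ℕ) ((Fin.castLE hδn' i : Fin n) : ℕ) :=
            hextsum δ hδn' d (fun k => w (j : ℕ) (k : ℕ))
        _ = ∑ i : Fin δ, d i * w (j : ℕ) (i : ℕ) := by
            refine Finset.sum_congr rfl fun i _ => ?_
            rw [Fin.coe_castLE]
    have hc0 : c ≠ 0 := by
      intro h
      apply hd0
      funext i
      have := congrFun h (Fin.castLE hδn' i)
      rw [hcsub] at this
      exact this
    have hwtle : hWt c ≤ δ := by
      have hsub : {j : Fin n | c j ≠ 0} ⊆
          ((Finset.univ.map (Fin.castLEEmb hδn') : Finset (Fin n)) : Set (Fin n)) := by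
        intro j hj
        simp only [Set.mem_setOf_eq] at hj
        have hjlt : (j : ℕ) < δ := by
          by_contra h
          rw [hc] at hj
          exact hj (dif_neg h)
        refine Finset.mem_coe.mpr (Finset.mem_map.mpr ⟨⟨(j : ℕ), hjlt⟩, Finset.mem_univ _, ?_⟩)
        apply Fin.ext
        simp
      calc hWt c ≤ ((Finset.univ.map (Fin.castLEEmb hδn') : Finset (Fin n)) : Set (Fin n)).ncard :=
            Set.ncard_le_ncard hsub (Set.toFinite _)
        _ = δ := by
            rw [Set.ncard_coe_finset, Finset.card_map, Finset.card_univ, Fintype.card_fin]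
    exact ⟨c, hcd, hc0, le_antisymm hwtle (part4 c hcd hc0)⟩
  exact ⟨part1, part2, part3, part4, part5⟩
end

section
/- Let t, u be positive integers with gcd(t, n) = 1 and u·t ≡ 1 (mod n). Let S = M[x;θ] and S' = M[y;θ^t], and consider the quotient K-algebras 𝒮 = S/S(x^n−1) and 𝒮' = S'/S'(y^n−1) (the polynomials x^n−1 and y^n−1 are central in S and S' respectively). Then the map φ : 𝒮 → 𝒮' determined by φ(a·x^i) = a·y^{iu} (for a ∈ M, 0 ≤ i ≤ n−1) is a well-defined isomorphism of K-algebras, and under the identifications of 𝒮 and 𝒮' with M^n via coefficient vectors of polynomials of degree < n, φ corresponds to the coordinate permutation ρ sending the vector (c_0, …, c_{n−1}) to the vector whose j-th coordinate is c_{jt mod n}. -/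
/-! The quotient algebras `𝒮 = M[x;θ]/(xⁿ-1)` and `𝒮' = M[y;θᵗ]/(yⁿ-1)` are modeled on
coefficient vectors `Fin n → M` of the degree `< n` representatives: multiplication is
`(f * g)ₖ = Σ_{i+j ≡ k (n)} fᵢ · τⁱ(gⱼ)` for the twisting automorphism `τ`. -/

variable {M : Type*} [Field M]

/-- Multiplication of `M[x;τ]/(xⁿ-1)` on coefficient vectors. -/
noncomputable def qMul (τ : M ≃+* M) (n : ℕ) (f g : Fin n → M) : Fin n → M :=
  fun k => ∑ i : Fin n, ∑ j : Fin n,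
    if ((i : ℕ) + (j : ℕ)) % n = (k : ℕ) then f i * (τ ^ (i : ℕ)) (g j) else 0

/-- The multiplicative identity of `M[x;τ]/(xⁿ-1)` as a coefficient vector. -/
noncomputable def qOne (M : Type*) [Field M] (n : ℕ) : Fin n → M :=
  fun k => if (k : ℕ) = 0 then 1 else 0

/-- The map `φ : 𝒮 → 𝒮'` determined by `φ(a·xⁱ) = a·y^{iu}`, on coefficient vectors. -/
noncomputable def qPhi (u : ℕ) {n : ℕ} (c : Fin n → M) : Fin n → M :=
  fun j => ∑ i : Fin n, if (i : ℕ) * u % n = (j : ℕ) then c i else 0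

/-- Let `θ` be an automorphism of `M` of finite order `n` with fixed field
`K = M^θ`, and `t, u > 0` with `gcd(t, n) = 1` and `u·t ≡ 1 (mod n)`. The map
`φ : S/S(xⁿ-1) → S'/S'(yⁿ-1)` (`S = M[x;θ]`, `S' = M[y;θᵗ]`) determined by
`φ(a·xⁱ) = a·y^{iu}` is a well-defined isomorphism of `K`-algebras (additive, multiplicative,
unital, `K`-linear and bijective), and under the identification with `Mⁿ` via coefficient
vectors it is the coordinate permutation `ρ` sending `(c₀, …, c_{n-1})` to the vector whose
`j`-th coordinate is `c_{jt mod n}`. -/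
theorem quotient_algebra_isomorphism {M : Type*} [Field M] (θ : M ≃+* M) (n : ℕ)
    (hn : 0 < n) (hord : orderOf θ = n)
    (t u : ℕ) (ht : 0 < t) (hu : 0 < u)
    (hgcd : Nat.gcd t n = 1) (hut : u * t % n = 1 % n) :
    (∀ c d : Fin n → M, qPhi u (c + d) = qPhi u c + qPhi u d) ∧
    (∀ c d : Fin n → M, qPhi u (qMul θ n c d) = qMul (θ ^ t) n (qPhi u c) (qPhi u d)) ∧
    qPhi u (qOne M n) = qOne M n ∧
    (∀ a : M, θ a = a → ∀ c : Fin n → M,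
      qPhi u (fun i => a * c i) = fun j => a * qPhi u c j) ∧
    Function.Bijective (qPhi u : (Fin n → M) → (Fin n → M)) ∧
    (∀ c : Fin n → M, qPhi u c = fun j : Fin n => c ⟨(j : ℕ) * t % n, Nat.mod_lt _ hn⟩) := by
  have hmodeq : u * t ≡ 1 [MOD n] := hut
  have hA : ∀ a : ℕ, (a * u % n) * t % n = a % n := by
    intro a
    have h1 : (a * u % n) * t % n = a * u * t % n := Nat.mod_mul_mod _ _ _
    have h2 : a * (u * t) % n = a * 1 % n := Nat.ModEq.mul_left a hmodeq
    rw [h1, mul_assoc]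
    simpa using h2
  have hB : ∀ a : ℕ, (a * t % n) * u % n = a % n := by
    intro a
    have h1 : (a * t % n) * u % n = a * t * u % n := Nat.mod_mul_mod _ _ _
    have hmodeq' : t * u ≡ 1 [MOD n] := by rwa [mul_comm] at hmodeq
    have h2 : a * (t * u) % n = a * 1 % n := Nat.ModEq.mul_left a hmodeq'
    rw [h1, mul_assoc]
    simpa using h2
  have hkey : ∀ (a b : ℕ), b < n → (a * u % n = b ↔ a % n = b * t % n) := by
    intro a b hb
    constructor
    · intro h; rw [← h, hA]
    · intro h
      have h1 : a * u % n = a % n * u % n := (Nat.mod_mul_mod _ _ _).symm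
      rw [h1, h, hB]
      exact Nat.mod_eq_of_lt hb
  -- the map is the coordinate permutation ρ
  have hρ : ∀ (c : Fin n → M) (j : Fin n),
      qPhi u c j = c ⟨(j : ℕ) * t % n, Nat.mod_lt _ hn⟩ := by
    intro c j
    unfold qPhi
    rw [Finset.sum_eq_single (⟨(j : ℕ) * t % n, Nat.mod_lt _ hn⟩ : Fin n)]
    · rw [if_pos]
      show ((j : ℕ) * t % n) * u % n = (j : ℕ)
      rw [hB]
      exact Nat.mod_eq_of_lt j.isLt
    · intro i _ hi
      rw [if_neg]
      intro hcond
      apply hi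
      apply Fin.ext
      have := (hkey (i : ℕ) (j : ℕ) j.isLt).mp hcond
      rwa [Nat.mod_eq_of_lt i.isLt] at this
    · intro h; exact absurd (Finset.mem_univ _) h
  have hrho : ∀ c : Fin n → M,
      qPhi u c = fun j : Fin n => c ⟨(j : ℕ) * t % n, Nat.mod_lt _ hn⟩ := by
    intro c; funext j; exact hρ c j
  refine ⟨?_, ?_, ?_, ?_, ?_, hrho⟩
  · intro c d
    funext j
    simp only [Pi.add_apply]
    rw [hρ, hρ, hρ]
    simp [Pi.add_apply]
  · intro c d
    funext k
    rw [hρ]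
    show qMul θ n c d ⟨(k : ℕ) * t % n, Nat.mod_lt _ hn⟩
        = qMul (θ ^ t) n (qPhi u c) (qPhi u d) k
    unfold qMul
    -- reindexing equivalence p = i*u mod n
    let e : Fin n ≃ Fin n :=
      { toFun := fun i => ⟨(i : ℕ) * u % n, Nat.mod_lt _ hn⟩
        invFun := fun i => ⟨(i : ℕ) * t % n, Nat.mod_lt _ hn⟩
        left_inv := fun i => Fin.ext (by
          show ((i : ℕ) * u % n) * t % n = (i : ℕ)
          rw [hA]; exact Nat.mod_eq_of_lt i.isLt)
        right_inv := fun i => Fin.ext (by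
          show ((i : ℕ) * t % n) * u % n = (i : ℕ)
          rw [hB]; exact Nat.mod_eq_of_lt i.isLt) }
    refine Fintype.sum_equiv e _ _ ?_
    intro i
    refine Fintype.sum_equiv e _ _ ?_
    intro j
    have hval : ∀ i : Fin n, ((e i : Fin n) : ℕ) = (i : ℕ) * u % n := fun _ => rfl
    -- the conditions are equivalent
    have hcond : (((i : ℕ) + (j : ℕ)) % n = (k : ℕ) * t % n)
        ↔ (((e i : Fin n) : ℕ) + ((e j : Fin n) : ℕ)) % n = (k : ℕ) := by
      rw [hval, hval]
      have h1 : ((i : ℕ) * u % n + (j : ℕ) * u % n) % n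
          = ((i : ℕ) + (j : ℕ)) * u % n := by
        rw [← Nat.add_mod, add_mul]
      rw [h1]
      exact (hkey ((i : ℕ) + (j : ℕ)) (k : ℕ) k.isLt).symm
    -- the coefficients transported back
    have hc : qPhi u c (e i) = c i := by
      rw [hρ]
      congr 1
      apply Fin.ext
      show ((i : ℕ) * u % n) * t % n = (i : ℕ)
      rw [hA]; exact Nat.mod_eq_of_lt i.isLt
    have hd : qPhi u d (e j) = d j := by
      rw [hρ]
      congr 1
      apply Fin.ext
      show ((j : ℕ) * u % n) * t % n = (j : ℕ)
      rw [hA]; exact Nat.mod_eq_of_lt j.isLt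
    -- the automorphism powers agree
    have hpow : (θ ^ t) ^ (((e i : Fin n) : ℕ)) = θ ^ ((i : ℕ)) := by
      rw [← pow_mul]
      refine pow_eq_pow_iff_modEq.mpr ?_
      rw [hord]
      calc t * ((i : ℕ) * u % n) ≡ t * ((i : ℕ) * u) [MOD n] :=
            Nat.ModEq.mul_left t (Nat.mod_modEq _ _)
        _ = (i : ℕ) * (u * t) := by ring
        _ ≡ (i : ℕ) * 1 [MOD n] := Nat.ModEq.mul_left _ hmodeq
        _ = (i : ℕ) := mul_one _
    show (if ((i : ℕ) + (j : ℕ)) % n = (k : ℕ) * t % n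
        then c i * (θ ^ ((i : ℕ))) (d j) else 0)
      = (if (((e i : Fin n) : ℕ) + ((e j : Fin n) : ℕ)) % n = (k : ℕ)
        then qPhi u c (e i) * ((θ ^ t) ^ (((e i : Fin n) : ℕ))) (qPhi u d (e j)) else 0)
    rw [hc, hd, hpow]
    exact if_congr hcond rfl rfl
  · funext j
    rw [hρ]
    unfold qOne
    by_cases hj : (j : ℕ) = 0
    · rw [if_pos, if_pos hj]
      show (j : ℕ) * t % n = 0
      rw [hj, zero_mul, Nat.zero_mod]
    · rw [if_neg, if_neg hj]
      show ¬ (j : ℕ) * t % n = 0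
      intro h0
      apply hj
      have : ((j : ℕ) * t % n) * u % n = (j : ℕ) % n := hB (j : ℕ)
      rw [h0, Nat.zero_mul, Nat.zero_mod, Nat.mod_eq_of_lt j.isLt] at this
      exact this.symm
  · intro a _ c
    funext j
    rw [hρ]
    show (fun i => a * c i) _ = a * qPhi u c j
    rw [hρ]
  · refine Function.bijective_iff_has_inverse.mpr
      ⟨fun c j => c ⟨(j : ℕ) * u % n, Nat.mod_lt _ hn⟩, ?_, ?_⟩
    · intro c
      funext j
      show qPhi u c ⟨(j : ℕ) * u % n, Nat.mod_lt _ hn⟩ = c j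
      rw [hρ]
      congr 1
      apply Fin.ext
      show ((j : ℕ) * u % n) * t % n = (j : ℕ)
      rw [hA]; exact Nat.mod_eq_of_lt j.isLt
    · intro c
      funext j
      rw [hρ]
      show c ⟨((j : ℕ) * t % n) * u % n, _⟩ = c j
      congr 1
      apply Fin.ext
      show ((j : ℕ) * t % n) * u % n = (j : ℕ)
      rw [hB]; exact Nat.mod_eq_of_lt j.isLt
end

section
/- In the skew polynomial ring S = M[x;θ], one has ⋂_{i=0}^{n−1} S·(x − θ^i(β)) = S·(x^n − 1); equivalently, x^n − 1 = lclm(x − β, x − θ(β), …, x − θ^{n−1}(β)). -/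
/-! Skew polynomials over a field `M` twisted by a ring automorphism `θ` (`x·a = θ(a)·x`),
modeled as finitely supported functions `ℕ →₀ M` (coefficient of `xⁱ` at `i`),
with left-coefficient multiplication `(Σᵢ aᵢ xⁱ)·(Σⱼ bⱼ xʲ) = Σᵢⱼ aᵢ θⁱ(bⱼ) x^{i+j}`. -/

variable {M : Type*} [Field M]

section A
variable (θ : M ≃+* M)

lemma sMul_zero_left (g : ℕ →₀ M) : sMul θ 0 g = 0 := Finsupp.sum_zero_index

lemma sMul_single_left (i : ℕ) (a : M) (g : ℕ →₀ M) :
    sMul θ (Finsupp.single i a) g = g.sum fun j b => Finsupp.single (i + j) (a * (θ ^ i) b) := by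
  unfold sMul
  refine Finsupp.sum_single_index ?_
  simp

lemma sMul_add_left (f f' g : ℕ →₀ M) :
    sMul θ (f + f') g = sMul θ f g + sMul θ f' g := by
  unfold sMul
  refine Finsupp.sum_add_index' (fun i => by simp) (fun i a a' => ?_)
  rw [← Finsupp.sum_add]
  congr 1; ext j b
  rw [add_mul, Finsupp.single_add]

lemma lIdeal_zero (g : ℕ →₀ M) : 0 ∈ lIdeal θ g := ⟨0, (sMul_zero_left θ g).symm⟩

lemma lIdeal_add {g h h' : ℕ →₀ M} (hh : h ∈ lIdeal θ g) (hh' : h' ∈ lIdeal θ g) :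
    h + h' ∈ lIdeal θ g := by
  obtain ⟨q, rfl⟩ := hh; obtain ⟨q', rfl⟩ := hh'
  exact ⟨q + q', (sMul_add_left θ q q' g).symm⟩

lemma sMul_single_sub_single (i : ℕ) (a : M) (p q : ℕ) (b c : M) :
    sMul θ (Finsupp.single i a) (Finsupp.single p b - Finsupp.single q c)
      = Finsupp.single (i + p) (a * (θ ^ i) b) - Finsupp.single (i + q) (a * (θ ^ i) c) := by
  rw [sMul_single_left, Finsupp.sum_sub_index (fun x b₁ b₂ => by
    rw [map_sub, mul_sub, Finsupp.single_sub]),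
    Finsupp.sum_single_index (by simp), Finsupp.sum_single_index (by simp)]

lemma sMul_single_Xsub (i : ℕ) (a : M) (γ : M) :
    sMul θ (Finsupp.single i a) (Xsub γ)
      = Finsupp.single (i + 1) a - Finsupp.single i (a * (θ ^ i) γ) := by
  rw [Xsub, sMul_single_sub_single, map_one, mul_one, add_zero]

lemma sMul_single_Xn (i : ℕ) (a : M) (n : ℕ) :
    sMul θ (Finsupp.single i a) (XnSubOne n)
      = Finsupp.single (i + n) a - Finsupp.single i a := by
  rw [XnSubOne, sMul_single_sub_single]
  simp

noncomputable def NK (γ : M) (k : ℕ) : M := ∏ m ∈ Finset.range k, (θ ^ m) γ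

noncomputable def ev (γ : M) : (ℕ →₀ M) →ₗ[M] M := Finsupp.linearCombination M (NK θ γ)

lemma ev_single (γ : M) (k : ℕ) (a : M) :
    ev θ γ (Finsupp.single k a) = a * NK θ γ k := by
  rw [ev, Finsupp.linearCombination_single, smul_eq_mul]

lemma NK_succ (γ : M) (k : ℕ) : NK θ γ (k + 1) = NK θ γ k * (θ ^ k) γ :=
  Finset.prod_range_succ _ _

lemma ev_sMul_single_Xsub (γ : M) (i : ℕ) (a : M) :
    ev θ γ (sMul θ (Finsupp.single i a) (Xsub γ)) = 0 := by
  rw [sMul_single_Xsub, map_sub, ev_single, ev_single, NK_succ]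
  ring

lemma ev_of_mem_Xsub (γ : M) {f : ℕ →₀ M} (hf : f ∈ lIdeal θ (Xsub γ)) :
    ev θ γ f = 0 := by
  obtain ⟨q, rfl⟩ := hf
  induction q using Finsupp.induction with
  | zero => rw [sMul_zero_left, map_zero]
  | single_add i a q _ _ ih =>
    rw [sMul_add_left, map_add, ih, ev_sMul_single_Xsub, zero_add]

lemma mem_Xsub_of_ev (γ : M) : ∀ (d : ℕ) (f : ℕ →₀ M), (∀ j, d < j → f j = 0) →
    ev θ γ f = 0 → f ∈ lIdeal θ (Xsub γ) := by
  intro d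
  induction d with
  | zero =>
    intro f hb he
    have hf : f = Finsupp.single 0 (f 0) := by
      ext j
      cases j with
      | zero => simp
      | succ m => rw [hb _ (Nat.succ_pos m)]; simp
    have : f 0 = 0 := by
      have := he
      rw [hf, ev_single] at this
      simpa [NK] using this
    rw [hf, this, Finsupp.single_zero]
    exact lIdeal_zero θ _
  | succ d ih =>
    intro f hb he
    set c := f (d + 1) with hc
    set g := f - sMul θ (Finsupp.single d c) (Xsub γ) with hg
    have hmem : sMul θ (Finsupp.single d c) (Xsub γ) ∈ lIdeal θ (Xsub γ) := ⟨_, rfl⟩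
    have hgb : ∀ j, d < j → g j = 0 := by
      intro j hj
      rw [hg, sMul_single_Xsub]
      rcases eq_or_lt_of_le (Nat.succ_le_of_lt hj) with h | h
      · rw [Finsupp.sub_apply, Finsupp.sub_apply, ← h, Finsupp.single_eq_same,
          Finsupp.single_eq_of_ne (by omega), hc]
        ring
      · rw [Finsupp.sub_apply, Finsupp.sub_apply, hb j h,
          Finsupp.single_eq_of_ne (by omega), Finsupp.single_eq_of_ne (by omega)]
        simp
    have hge : ev θ γ g = 0 := by
      rw [hg, map_sub, he, ev_sMul_single_Xsub, sub_zero]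
    have := ih g hgb hge
    have : g + sMul θ (Finsupp.single d c) (Xsub γ) ∈ lIdeal θ (Xsub γ) :=
      lIdeal_add θ this hmem
    rwa [hg, sub_add_cancel] at this

end A

section B
variable (θ : M ≃+* M)

lemma pow_apply_pow (a b : ℕ) (x : M) : (θ ^ a) ((θ ^ b) x) = (θ ^ (a + b)) x := by
  rw [pow_add]; rfl

lemma NK_beta (α : M) (hα0 : α ≠ 0) (β : M) (hβ : β = α⁻¹ * θ α) (i k : ℕ) :
    NK θ ((θ ^ i) β) k = ((θ ^ i) α)⁻¹ * (θ ^ (i + k)) α := by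
  have hθα : ∀ m : ℕ, (θ ^ m) α ≠ 0 :=
    fun m h => hα0 ((θ ^ m).injective (by rw [h, map_zero]))
  induction k with
  | zero => rw [NK, Finset.range_zero, Finset.prod_empty, add_zero, inv_mul_cancel₀ (hθα i)]
  | succ k ih =>
    have h3 : (θ ^ (k + i)) (θ α) = (θ ^ (i + k + 1)) α := by
      rw [show i + k + 1 = (k + i) + 1 by omega, pow_succ]; rfl
    have h2 : (θ ^ k) ((θ ^ i) β) = ((θ ^ (i + k)) α)⁻¹ * (θ ^ (i + k + 1)) α := by
      rw [pow_apply_pow θ k i, hβ, map_mul, map_inv₀, h3, Nat.add_comm k i]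
    rw [NK_succ, ih, h2]
    have hne := hθα (i + k)
    rw [mul_assoc, ← mul_assoc ((θ ^ (i + k)) α), mul_inv_cancel₀ hne, one_mul,
      show i + (k + 1) = i + k + 1 by omega]

end B

open Classical in
lemma circulant (θ : M ≃+* M) (n : ℕ) (hn : 0 < n) (hord : orderOf θ = n) (α : M)
    (hα : NormalBasis θ n α) :
    ∀ (s : ℕ) (c : Fin n → M),
      (∀ i : ℕ, ∑ k : Fin n, c k * (θ ^ (i + (k : ℕ))) α = 0) →
      (Finset.univ.filter fun k => c k ≠ 0).card ≤ s → c = 0 := by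
  classical
  have hθn : θ ^ n = 1 := by rw [← hord]; exact pow_orderOf_eq_one θ
  have hper : ∀ m : ℕ, (θ ^ (m + n)) α = (θ ^ m) α := by
    intro m; rw [pow_add, hθn, mul_one]
  intro s
  induction s with
  | zero =>
    intro c _ hcard
    funext k
    by_contra h
    have hk : k ∈ Finset.univ.filter fun k => c k ≠ 0 := by
      simp only [Finset.mem_filter, Finset.mem_univ, true_and]; exact h
    have := Finset.card_pos.mpr ⟨k, hk⟩
    omega
  | succ s ih =>
    intro c hP hcard
    by_cases hc : c = 0
    · exact hc
    exfalso
    obtain ⟨k0, hk0⟩ : ∃ k0, c k0 ≠ 0 := by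
      by_contra h; push_neg at h; exact hc (funext h)
    have hθk0 : θ (c k0) ≠ 0 := fun h => hk0 (θ.injective (by rw [h, map_zero]))
    have hPθ : ∀ i : ℕ, ∑ k : Fin n, θ (c k) * (θ ^ (i + (k : ℕ))) α = 0 := by
      intro i
      have h1 := hP (i + n - 1)
      have h2 : ∑ k : Fin n, θ (c k) * (θ ^ (i + (k : ℕ))) α
          = θ (∑ k : Fin n, c k * (θ ^ (i + n - 1 + (k : ℕ))) α) := by
        rw [map_sum]
        refine Finset.sum_congr rfl fun k _ => ?_
        rw [map_mul]
        congr 1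
        have hθ1 : θ ((θ ^ (i + n - 1 + (k : ℕ))) α) = (θ ^ (1 + (i + n - 1 + (k : ℕ)))) α := by
          rw [← pow_apply_pow θ 1, pow_one]
        rw [hθ1, show 1 + (i + n - 1 + (k : ℕ)) = (i + (k : ℕ)) + n by omega, hper]
      rw [h2, h1, map_zero]
    set c' : Fin n → M := fun k => θ (c k) * c k0 - c k * θ (c k0) with hc'
    have hPc' : ∀ i : ℕ, ∑ k : Fin n, c' k * (θ ^ (i + (k : ℕ))) α = 0 := by
      intro i
      have e : ∑ k : Fin n, c' k * (θ ^ (i + (k : ℕ))) α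
          = c k0 * (∑ k : Fin n, θ (c k) * (θ ^ (i + (k : ℕ))) α)
            - θ (c k0) * (∑ k : Fin n, c k * (θ ^ (i + (k : ℕ))) α) := by
        rw [Finset.mul_sum, Finset.mul_sum, ← Finset.sum_sub_distrib]
        refine Finset.sum_congr rfl fun k _ => ?_
        ring
      rw [e, hPθ, hP, mul_zero, mul_zero, sub_zero]
    have hsub : (Finset.univ.filter fun k => c' k ≠ 0)
        ⊆ (Finset.univ.filter fun k => c k ≠ 0).erase k0 := by
      intro k hk
      simp only [Finset.mem_filter, Finset.mem_univ, true_and, Finset.mem_erase] at hk ⊢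
      constructor
      · rintro rfl
        exact hk (by simp only [hc']; ring)
      · intro h
        exact hk (by simp [hc', h])
    have hk0mem : k0 ∈ Finset.univ.filter fun k => c k ≠ 0 := by
      simp only [Finset.mem_filter, Finset.mem_univ, true_and]; exact hk0
    have hcard' : (Finset.univ.filter fun k => c' k ≠ 0).card ≤ s := by
      have h1 := Finset.card_le_card hsub
      have h2 := Finset.card_erase_of_mem hk0mem
      omega
    have hc'0 := ih c' hPc' hcard'
    have hrel : ∀ k, θ (c k) * c k0 = c k * θ (c k0) := by
      intro k
      have := congrFun hc'0 k
      simpa [hc', sub_eq_zero] using this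
    set d : Fin n → fixedSubfield θ := fun k => ⟨c k * (c k0)⁻¹, by
      show θ (c k * (c k0)⁻¹) = c k * (c k0)⁻¹
      rw [map_mul, map_inv₀]
      field_simp
      linear_combination hrel k⟩ with hd
    have hsum : ∑ k : Fin n, d k • (θ ^ (k : ℕ)) α = 0 := by
      have h0 := hP 0
      have : ∑ k : Fin n, (d k : M) * (θ ^ (k : ℕ)) α
          = (c k0)⁻¹ * ∑ k : Fin n, c k * (θ ^ (0 + (k : ℕ))) α := by
        rw [Finset.mul_sum]
        refine Finset.sum_congr rfl fun k _ => ?_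
        simp only [hd, zero_add]
        ring
      rw [h0, mul_zero] at this
      exact this
    have hall := Fintype.linearIndependent_iff.mp hα.1 d hsum k0
    have : c k0 * (c k0)⁻¹ = 0 := congrArg Subtype.val hall
    rw [mul_inv_cancel₀ hk0] at this
    exact one_ne_zero this

lemma NK_beta_per (θ : M ≃+* M) (n : ℕ) (hord : orderOf θ = n)
    (α : M) (hα0 : α ≠ 0) (β : M) (hβ : β = α⁻¹ * θ α) (i k : ℕ) :
    NK θ ((θ ^ i) β) (k + n) = NK θ ((θ ^ i) β) k := by
  have hθn : θ ^ n = 1 := by rw [← hord]; exact pow_orderOf_eq_one θ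
  rw [NK_beta θ α hα0 β hβ, NK_beta θ α hα0 β hβ]
  congr 1
  rw [show i + (k + n) = (i + k) + n by omega, pow_add, hθn, mul_one]

lemma ev_sMul_single_Xn (θ : M ≃+* M) (n : ℕ) (hord : orderOf θ = n)
    (α : M) (hα0 : α ≠ 0) (β : M) (hβ : β = α⁻¹ * θ α) (i j : ℕ) (a : M) :
    ev θ ((θ ^ i) β) (sMul θ (Finsupp.single j a) (XnSubOne n)) = 0 := by
  rw [sMul_single_Xn, map_sub, ev_single, ev_single,
    show j + n = j + n from rfl, NK_beta_per θ n hord α hα0 β hβ, sub_self]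

lemma ev_sMul_Xn (θ : M ≃+* M) (n : ℕ) (hord : orderOf θ = n)
    (α : M) (hα0 : α ≠ 0) (β : M) (hβ : β = α⁻¹ * θ α) (i : ℕ) (q : ℕ →₀ M) :
    ev θ ((θ ^ i) β) (sMul θ q (XnSubOne n)) = 0 := by
  induction q using Finsupp.induction with
  | zero => rw [sMul_zero_left, map_zero]
  | single_add j a q _ _ ih =>
    rw [sMul_add_left, map_add, ih, ev_sMul_single_Xn θ n hord α hα0 β hβ i j a, zero_add]

lemma mem_Xsub_of_ev' (θ : M ≃+* M) (γ : M) (f : ℕ →₀ M) (he : ev θ γ f = 0) :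
    f ∈ lIdeal θ (Xsub γ) := by
  refine mem_Xsub_of_ev θ γ (f.support.sup id) f (fun j hj => ?_) he
  by_contra h
  have : j ∈ f.support := Finsupp.mem_support_iff.mpr h
  have := Finset.le_sup (f := id) this
  simp only [id] at this
  omega

lemma mem_Xn (θ : M ≃+* M) (n : ℕ) (hn : 0 < n) (hord : orderOf θ = n)
    (α : M) (hα : NormalBasis θ n α) (β : M) (hβ : β = α⁻¹ * θ α) :
    ∀ (d : ℕ) (f : ℕ →₀ M), (∀ j, n + d ≤ j → f j = 0) →
      (∀ i, i < n → ev θ ((θ ^ i) β) f = 0) → f ∈ lIdeal θ (XnSubOne n) := by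
  have hα0 : α ≠ 0 := by
    have := hα.1.ne_zero ⟨0, hn⟩
    simpa using this
  have hθα : ∀ m : ℕ, (θ ^ m) α ≠ 0 :=
    fun m h => hα0 ((θ ^ m).injective (by rw [h, map_zero]))
  intro d
  induction d with
  | zero =>
    intro f hb he
    have hev : ∀ γ : M, ev θ γ f = ∑ k ∈ Finset.range n, f k * NK θ γ k := by
      intro γ
      rw [ev, Finsupp.linearCombination_apply, Finsupp.sum]
      rw [Finset.sum_subset (h := ?_) (hf := ?_)]
      · exact Finset.sum_congr rfl fun k _ => by rw [smul_eq_mul]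
      · intro k hk
        rw [Finsupp.mem_support_iff] at hk
        rw [Finset.mem_range]
        by_contra h
        exact hk (hb k (by omega))
      · intro k _ hk
        rw [Finsupp.notMem_support_iff] at hk
        rw [hk, zero_smul]
    have hcond : ∀ i : ℕ, ∑ k : Fin n, f (k : ℕ) * (θ ^ (i + (k : ℕ))) α = 0 := by
      intro i
      have hi' : i % n < n := Nat.mod_lt _ hn
      have h1 := he (i % n) hi'
      rw [hev] at h1
      have h2 : ∑ k ∈ Finset.range n, f k * (((θ ^ (i % n)) α)⁻¹ * (θ ^ (i % n + k)) α) = 0 := by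
        rw [← h1]
        exact Finset.sum_congr rfl fun k _ => by rw [NK_beta θ α hα0 β hβ]
      have h3 : ∑ k ∈ Finset.range n, f k * (θ ^ (i % n + k)) α = 0 := by
        have h4 : ((θ ^ (i % n)) α)⁻¹ * ∑ k ∈ Finset.range n, f k * (θ ^ (i % n + k)) α = 0 := by
          rw [Finset.mul_sum,
            show (∑ k ∈ Finset.range n, ((θ ^ (i % n)) α)⁻¹ * (f k * (θ ^ (i % n + k)) α))
              = ∑ k ∈ Finset.range n, f k * (((θ ^ (i % n)) α)⁻¹ * (θ ^ (i % n + k)) α)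
              from Finset.sum_congr rfl fun k _ => by ring, h2]
        rcases mul_eq_zero.mp h4 with h | h
        · exact absurd h (inv_ne_zero (hθα _))
        · exact h
      have h5 : ∀ k : ℕ, (θ ^ (i % n + k)) α = (θ ^ (i + k)) α := by
        intro k
        have hmod : (θ : M ≃+* M) ^ (i % n) = θ ^ i := by
          rw [← hord]; exact pow_mod_orderOf θ i
        rw [pow_add, pow_add, hmod]
      rw [← Finset.sum_range fun k => f k * (θ ^ (i + k)) α, ← h3]
      exact Finset.sum_congr rfl fun k _ => by rw [h5]
    have hc0 : (fun k : Fin n => f (k : ℕ)) = 0 :=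
      circulant θ n hn hord α hα n _ hcond
        (le_trans (Finset.card_le_univ _) (by simp))
    have hf0 : f = 0 := by
      ext j
      by_cases hj : j < n
      · exact congrFun hc0 ⟨j, hj⟩
      · exact hb j (by omega)
    rw [hf0]
    exact lIdeal_zero θ _
  | succ d ih =>
    intro f hb he
    set c := f (n + d) with hc
    set g := f - sMul θ (Finsupp.single d c) (XnSubOne n) with hg
    have hgb : ∀ j, n + d ≤ j → g j = 0 := by
      intro j hj
      rw [hg, sMul_single_Xn, Finsupp.sub_apply, Finsupp.sub_apply]
      rcases eq_or_lt_of_le hj with h | h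
      · rw [← h, show d + n = n + d by omega, Finsupp.single_eq_same,
          Finsupp.single_eq_of_ne (by omega), hc]
        ring
      · rw [hb j (by omega), Finsupp.single_eq_of_ne (by omega),
          Finsupp.single_eq_of_ne (by omega)]
        ring
    have hge : ∀ i, i < n → ev θ ((θ ^ i) β) g = 0 := by
      intro i hi
      rw [hg, map_sub, he i hi, ev_sMul_single_Xn θ n hord α hα0 β hβ i d c, zero_sub, neg_zero]
    have hgmem := ih g hgb hge
    have hfin : g + sMul θ (Finsupp.single d c) (XnSubOne n) ∈ lIdeal θ (XnSubOne n) :=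
      lIdeal_add θ hgmem ⟨_, rfl⟩
    rwa [hg, sub_add_cancel] at hfin

/-- Let `θ` be an automorphism of `M` of finite order `n` with `K = M^θ`,
`α` generating a normal basis of `M/K`, and `β = α⁻¹θ(α)`. Then in `S = M[x;θ]`,
`⋂_{i=0}^{n-1} S·(x - θⁱ(β)) = S·(xⁿ - 1)`; equivalently
`xⁿ - 1 = lclm(x - β, x - θ(β), …, x - θ^{n-1}(β))`. -/
theorem xn_sub_one_eq_lclm {M : Type*} [Field M] (θ : M ≃+* M) (n : ℕ) (hn : 0 < n)
    (hord : orderOf θ = n) (α : M) (hα : NormalBasis θ n α) (β : M) (hβ : β = α⁻¹ * θ α) :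
    (⋂ i ∈ Finset.range n, lIdeal θ (Xsub ((θ ^ i) β))) = lIdeal θ (XnSubOne n) := by
  classical
  have hα0 : α ≠ 0 := by
    have := hα.1.ne_zero ⟨0, hn⟩
    simpa using this
  ext f
  simp only [Set.mem_iInter]
  constructor
  · intro hf
    refine mem_Xn θ n hn hord α hα β hβ (f.support.sup id + 1) f (fun j hj => ?_)
      (fun i hi => ?_)
    · by_contra h
      have h1 : j ∈ f.support := Finsupp.mem_support_iff.mpr h
      have h2 := Finset.le_sup (f := id) h1
      simp only [id] at h2
      omega
    · exact ev_of_mem_Xsub θ _ (hf i (Finset.mem_range.mpr hi))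
  · rintro ⟨q, rfl⟩ i hi
    exact mem_Xsub_of_ev' θ _ _ (ev_sMul_Xn θ n hord α hα0 β hβ i q)
end

section
/- Let q be a prime power, let μ, s, h be positive integers with gcd(h, μ) = 1, let a be the product of the distinct primes dividing s that do not divide h, and set k = aμ + h. Then gcd(k, μs) = 1. Consequently, the automorphism θ : x ↦ x^{q^k} of the finite field F_{q^{μs}} has order μs and fixed field F_q, and its restriction to the subfield F_{q^μ} is the automorphism σ : x ↦ x^{q^h}, which has order μ and fixed field F_q; that is, θ is an extension of degree s of σ. -/
section St17Aux

/-- Iterating a Frobenius-type fixed point. -/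
lemma st17_iter {M : Type*} [Monoid M] {q b : ℕ} (x : M) (hx : x ^ q ^ b = x) :
    ∀ t : ℕ, x ^ q ^ (b * t) = x := by
  intro t
  induction t with
  | zero => simp
  | succ t ih =>
      have : q ^ (b * (t + 1)) = q ^ (b * t) * q ^ b := by ring
      rw [this, pow_mul, ih, hx]

/-- If `x` is fixed by `q^m`-power and `q^n`-power maps, it is fixed by the
`q^(gcd m n)`-power map. -/
lemma st17_gcd_fixed {F : Type*} [Field F] {q m n : ℕ} (hq : 2 ≤ q) (hm : 0 < m) (hn : 0 < n)
    (x : F) (hxm : x ^ q ^ m = x) (hxn : x ^ q ^ n = x) :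
    x ^ q ^ Nat.gcd m n = x := by
  rcases eq_or_ne x 0 with rfl | hx0
  · exact zero_pow (by positivity)
  have key : ∀ j : ℕ, x ^ q ^ j = x → x ^ (q ^ j - 1) = 1 := by
    intro j hj
    have h1 : 1 ≤ q ^ j := Nat.one_le_pow _ _ (by omega)
    have : x ^ (q ^ j - 1) * x = 1 * x := by
      rw [one_mul, ← pow_succ, Nat.sub_add_cancel h1]; exact hj
    exact mul_right_cancel₀ hx0 this
  have hx1m : x ^ (q ^ m - 1) = 1 := key m hxm
  have hx1n : x ^ (q ^ n - 1) = 1 := key n hxn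
  set d := orderOf x with hd
  have hdm : d ∣ q ^ m - 1 := orderOf_dvd_of_pow_eq_one hx1m
  have hdn : d ∣ q ^ n - 1 := orderOf_dvd_of_pow_eq_one hx1n
  -- pass to ZMod d
  have cast_one : ∀ j : ℕ, 0 < j → (d ∣ q ^ j - 1 ↔ (q : ZMod d) ^ j = 1) := by
    intro j hj
    have h1 : 1 ≤ q ^ j := Nat.one_le_pow _ _ (by omega)
    rw [← ZMod.natCast_eq_zero_iff]
    push_cast [Nat.cast_sub h1]
    constructor
    · intro hc; have := sub_eq_zero.mp hc; simpa using this
    · intro hc; rw [hc]; ring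
  have hqm : (q : ZMod d) ^ m = 1 := (cast_one m hm).mp hdm
  have hqn : (q : ZMod d) ^ n = 1 := (cast_one n hn).mp hdn
  have hfin : IsOfFinOrder (q : ZMod d) := isOfFinOrder_iff_pow_eq_one.2 ⟨m, hm, hqm⟩
  have hem : orderOf (q : ZMod d) ∣ m := orderOf_dvd_iff_pow_eq_one.2 hqm
  have hen : orderOf (q : ZMod d) ∣ n := orderOf_dvd_iff_pow_eq_one.2 hqn
  have heg : orderOf (q : ZMod d) ∣ Nat.gcd m n := Nat.dvd_gcd hem hen
  have hqg : (q : ZMod d) ^ Nat.gcd m n = 1 := orderOf_dvd_iff_pow_eq_one.1 heg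
  have hgpos : 0 < Nat.gcd m n := Nat.gcd_pos_of_pos_left n hm
  have hdg : d ∣ q ^ Nat.gcd m n - 1 := (cast_one _ hgpos).mpr hqg
  have hx1g : x ^ (q ^ Nat.gcd m n - 1) = 1 := orderOf_dvd_iff_pow_eq_one.1 hdg
  have h1 : 1 ≤ q ^ Nat.gcd m n := Nat.one_le_pow _ _ (by omega)
  calc x ^ q ^ Nat.gcd m n = x ^ (q ^ Nat.gcd m n - 1) * x := by
        rw [← pow_succ, Nat.sub_add_cancel h1]
    _ = x := by rw [hx1g, one_mul]

/-- `q^m - 1 ∣ q^n - 1` implies `m ∣ n` (for `q ≥ 2`, `m ≥ 1`). -/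
lemma st17_dvd_of_pow_sub_one_dvd {q m n : ℕ} (hq : 2 ≤ q) (hm : 0 < m)
    (H : q ^ m - 1 ∣ q ^ n - 1) : m ∣ n := by
  set d := q ^ m - 1 with hd
  have cast_one : ∀ j : ℕ, (d ∣ q ^ j - 1 ↔ (q : ZMod d) ^ j = 1) := by
    intro j
    have h1 : 1 ≤ q ^ j := Nat.one_le_pow _ _ (by omega)
    rw [← ZMod.natCast_eq_zero_iff]
    push_cast [Nat.cast_sub h1]
    constructor
    · intro hc; have := sub_eq_zero.mp hc; simpa using this
    · intro hc; rw [hc]; ring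
  have hqm : (q : ZMod d) ^ m = 1 := (cast_one m).mp dvd_rfl
  have hqn : (q : ZMod d) ^ n = 1 := (cast_one n).mp H
  have hfin : IsOfFinOrder (q : ZMod d) := isOfFinOrder_iff_pow_eq_one.2 ⟨m, hm, hqm⟩
  set e := orderOf (q : ZMod d) with he
  have hepos : 0 < e := hfin.orderOf_pos
  have hem : e ∣ m := orderOf_dvd_iff_pow_eq_one.2 hqm
  have hen : e ∣ n := orderOf_dvd_iff_pow_eq_one.2 hqn
  have hde : d ∣ q ^ e - 1 := (cast_one e).mpr (pow_orderOf_eq_one _)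
  have hqe1 : 2 ≤ q ^ e := by
    calc 2 ≤ q := hq
    _ = q ^ 1 := (pow_one q).symm
    _ ≤ q ^ e := Nat.pow_le_pow_right (by omega) hepos
  have hled : d ≤ q ^ e - 1 := Nat.le_of_dvd (by omega) hde
  have hqm1 : 1 ≤ q ^ m := Nat.one_le_pow _ _ (by omega)
  have hme : m ≤ e := by
    have : q ^ m ≤ q ^ e := by omega
    exact (Nat.pow_le_pow_iff_right (by omega)).mp this
  have : e = m := Nat.le_antisymm (Nat.le_of_dvd hm hem) hme
  rwa [← this]

/-- Upper bound on the number of solutions of `x ^ Q = x` in a field. -/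
lemma st17_count_le {F : Type*} [Field F] [Fintype F] {Q : ℕ} (hQ : 1 < Q) :
    Nat.card {x : F // x ^ Q = x} ≤ Q := by
  classical
  rw [Nat.card_eq_fintype_card, Fintype.card_subtype]
  have hne : (Polynomial.X ^ Q - Polynomial.X : Polynomial F) ≠ 0 :=
    FiniteField.X_pow_card_sub_X_ne_zero F hQ
  have hsub : (Finset.filter (fun x : F => x ^ Q = x) Finset.univ) ⊆
      (Polynomial.X ^ Q - Polynomial.X : Polynomial F).roots.toFinset := by
    intro x hx
    rw [Finset.mem_filter] at hx
    rw [Multiset.mem_toFinset, Polynomial.mem_roots hne]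
    simp [Polynomial.IsRoot, sub_eq_zero, hx.2]
  calc (Finset.filter (fun x : F => x ^ Q = x) Finset.univ).card
      ≤ (Polynomial.X ^ Q - Polynomial.X : Polynomial F).roots.toFinset.card :=
        Finset.card_le_card hsub
    _ ≤ Multiset.card (Polynomial.X ^ Q - Polynomial.X : Polynomial F).roots :=
        Multiset.toFinset_card_le _
    _ ≤ (Polynomial.X ^ Q - Polynomial.X : Polynomial F).natDegree :=
        Polynomial.card_roots' _
    _ = Q := FiniteField.X_pow_card_sub_X_natDegree_eq F hQ

/-- Exact count of solutions of `x ^ (q^d) = x` in a field with `q^n` elements, `d ∣ n`. -/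
lemma st17_count_eq {F : Type*} [Field F] [Fintype F] {q n d : ℕ} (hq : 2 ≤ q)
    (hn : 0 < n) (hd : 0 < d) (hdn : d ∣ n) (hF : Fintype.card F = q ^ n) :
    Nat.card {x : F // x ^ q ^ d = x} = q ^ d := by
  classical
  have hQ : 1 < q ^ d := Nat.one_lt_pow (by omega) (by omega)
  refine le_antisymm (st17_count_le hQ) ?_
  -- lower bound via a primitive (q^d - 1)-th root of unity
  obtain ⟨g, hg⟩ := IsCyclic.exists_ofOrder_eq_natCard (α := Fˣ)
  have hcardu : Nat.card Fˣ = q ^ n - 1 := by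
    rw [Nat.card_eq_fintype_card, Fintype.card_units, hF]
  set N := q ^ n - 1 with hN
  set D := q ^ d - 1 with hD
  have hDN : D ∣ N := by
    obtain ⟨t, rfl⟩ := hdn
    exact Nat.pow_sub_one_dvd_pow_sub_one q (Dvd.intro t rfl)
  have hNpos : 0 < N := by
    have : 1 < q ^ n := Nat.one_lt_pow (by omega) (by omega)
    omega
  have hDpos : 0 < D := by omega
  set η := g ^ (N / D) with hη
  have horder : orderOf η = D := by
    rw [hη, orderOf_pow, hg, hcardu]
    have h1 : Nat.gcd N (N / D) = N / D := Nat.gcd_eq_right (Nat.div_dvd_of_dvd hDN)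
    rw [h1, Nat.div_div_self hDN (by omega)]
  have hprim : IsPrimitiveRoot (η : F) D := by
    rw [IsPrimitiveRoot.coe_units_iff]
    rw [← horder]
    exact IsPrimitiveRoot.orderOf η
  have hcardroots : (Polynomial.nthRootsFinset D (1 : F)).card = D := hprim.card_nthRootsFinset
  have hsub : insert (0 : F) (Polynomial.nthRootsFinset D (1 : F)) ⊆
      Finset.filter (fun x : F => x ^ q ^ d = x) Finset.univ := by
    intro x hx
    rw [Finset.mem_insert] at hx
    rw [Finset.mem_filter]
    refine ⟨Finset.mem_univ _, ?_⟩
    rcases hx with rfl | hx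
    · exact zero_pow (by positivity)
    · have hx1 : x ^ D = 1 := (Polynomial.mem_nthRootsFinset hDpos (1 : F)).mp hx
      calc x ^ q ^ d = x ^ (D + 1) := by rw [hD, Nat.sub_add_cancel (by omega)]
        _ = x ^ D * x := by rw [pow_succ]
        _ = x := by rw [hx1, one_mul]
  have h0 : (0 : F) ∉ Polynomial.nthRootsFinset D (1 : F) := by
    intro h0
    have := (Polynomial.mem_nthRootsFinset hDpos (1 : F)).mp h0
    rw [zero_pow (by omega)] at this
    exact zero_ne_one this
  have hcardins : (insert (0 : F) (Polynomial.nthRootsFinset D (1 : F))).card = q ^ d := by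
    rw [Finset.card_insert_of_notMem h0, hcardroots]
    omega
  rw [Nat.card_eq_fintype_card, Fintype.card_subtype]
  calc q ^ d = (insert (0 : F) (Polynomial.nthRootsFinset D (1 : F))).card := hcardins.symm
    _ ≤ _ := Finset.card_le_card hsub

end St17Aux

/-- Let `q` be a prime power, `μ, s, h` positive integers with
`gcd(h, μ) = 1`, let `a` be the product of the distinct primes dividing `s` that do not
divide `h`, and set `k = a·μ + h`. Then `gcd(k, μ·s) = 1`. Consequently, if `F` is the finite
field with `q^{μs}` elements, the automorphism `θ : x ↦ x^{q^k}` of `F` has order `μ·s` and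
fixed field `F_q`, and its restriction to the subfield `F_{q^μ} = {x : x^{q^μ} = x}` is the
automorphism `σ : x ↦ x^{q^h}`, which has order `μ` and fixed field `F_q`; that is, `θ` is an
extension of degree `s` of `σ`. -/
theorem frobenius_extension_of_degree_s (q μ s h : ℕ) (hq : IsPrimePow q)
    (hμ : 0 < μ) (hs : 0 < s) (hh : 0 < h) (hgcdhμ : Nat.gcd h μ = 1)
    (a : ℕ) (ha : a = ∏ p ∈ s.primeFactors \ h.primeFactors, p)
    (k : ℕ) (hk : k = a * μ + h)
    (F : Type*) [Field F] [Fintype F] (hF : Fintype.card F = q ^ (μ * s))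
    (θ : F ≃+* F) (hθ : ∀ x : F, θ x = x ^ q ^ k) :
    Nat.gcd k (μ * s) = 1 ∧
    orderOf θ = μ * s ∧
    Nat.card {x : F // θ x = x} = q ∧
    (∀ x : F, x ^ q ^ μ = x → θ x = x ^ q ^ h) ∧
    (∀ m : ℕ, 0 < m → ((∀ x : F, x ^ q ^ μ = x → x ^ q ^ (h * m) = x) ↔ μ ∣ m)) ∧
    Nat.card {x : F // x ^ q ^ μ = x ∧ x ^ q ^ h = x} = q := by
  have hq2 : 2 ≤ q := hq.two_le
  have hkpos : 0 < k := by omega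
  have hμs : 0 < μ * s := Nat.mul_pos hμ hs
  -- Part 1 : gcd(k, μs) = 1
  have hkμ : Nat.Coprime k μ := by
    have : Nat.gcd (h + a * μ) μ = Nat.gcd h μ := Nat.gcd_add_mul_right_left μ h a
    unfold Nat.Coprime
    rw [hk, add_comm, this, hgcdhμ]
  have hks : Nat.Coprime k s := by
    by_contra hcon
    obtain ⟨p, hp, hpk, hps⟩ := Nat.Prime.not_coprime_iff_dvd.mp hcon
    by_cases hph : p ∣ h
    · -- p ∣ h : then p ∤ a and p ∤ μ, so p ∤ aμ, contradiction with p ∣ k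
      have hpa : ¬ p ∣ a := by
        intro hpa
        rw [ha] at hpa
        obtain ⟨r, hr, hpr⟩ := hp.prime.exists_mem_finset_dvd hpa
        rw [Finset.mem_sdiff] at hr
        have hrprime : r.Prime := Nat.prime_of_mem_primeFactors hr.1
        have : p = r := (Nat.prime_dvd_prime_iff_eq hp hrprime).mp hpr
        subst this
        exact hr.2 (Nat.mem_primeFactors.mpr ⟨hp, hph, by omega⟩)
      have hpμ : ¬ p ∣ μ := by
        intro hpμ
        have : p ∣ Nat.gcd h μ := Nat.dvd_gcd hph hpμ
        rw [hgcdhμ] at this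
        exact hp.one_lt.ne' (Nat.dvd_one.mp this)
      have hpaμ : p ∣ a * μ := by
        have h2 : p ∣ a * μ + h := hk ▸ hpk
        exact (Nat.dvd_add_iff_left hph).mpr h2
      rcases hp.prime.dvd_mul.mp hpaμ with h1 | h1
      · exact hpa h1
      · exact hpμ h1
    · -- p ∤ h : then p ∣ a, so p ∣ aμ, and p ∣ k gives p ∣ h, contradiction
      have hpmem : p ∈ s.primeFactors \ h.primeFactors := by
        rw [Finset.mem_sdiff]
        refine ⟨Nat.mem_primeFactors.mpr ⟨hp, hps, by omega⟩, ?_⟩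
        intro hmem
        exact hph (Nat.mem_primeFactors.mp hmem).2.1
      have hpa : p ∣ a := ha ▸ Finset.dvd_prod_of_mem id hpmem
      have hpaμ : p ∣ a * μ := hpa.mul_right μ
      have := (Nat.dvd_add_iff_right hpaμ).mpr (hk ▸ hpk)
      exact hph this
  have part1 : Nat.gcd k (μ * s) = 1 := Nat.Coprime.mul_right hkμ hks
  -- basic facts
  have hcard_fix : ∀ x : F, x ^ q ^ (μ * s) = x := by
    intro x
    have := FiniteField.pow_card x
    rwa [hF] at this
  -- apply powers of θ
  have hθpow : ∀ (j : ℕ) (x : F), (θ ^ j) x = x ^ q ^ (k * j) := by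
    intro j
    induction j with
    | zero => intro x; simp only [pow_zero, mul_zero, pow_one]; rfl
    | succ j ih =>
        intro x
        have hsucc : θ ^ (j + 1) = θ ^ j * θ := pow_succ θ j
        have happly : (θ ^ (j + 1)) x = (θ ^ j) (θ x) := by
          rw [hsucc]; rfl
        rw [happly, hθ, ih]
        rw [← pow_mul, ← pow_add]
        congr 1
        ring
  -- characterize θ^j = 1
  have hθone : ∀ j : ℕ, θ ^ j = 1 ↔ μ * s ∣ j := by
    intro j
    have step1 : θ ^ j = 1 ↔ ∀ x : F, x ^ q ^ (k * j) = x := by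
      constructor
      · intro h1 x
        have := congrArg (fun f : F ≃+* F => f x) h1
        simpa [hθpow j x] using this
      · intro hall
        ext x
        rw [hθpow j x, hall x]
        rfl
    have step2 : (∀ x : F, x ^ q ^ (k * j) = x) ↔ (∀ u : Fˣ, u ^ (q ^ (k * j) - 1) = 1) := by
      have hqkj : 1 ≤ q ^ (k * j) := Nat.one_le_pow _ _ (by omega)
      constructor
      · intro hall u
        have hu : (u : F) ^ q ^ (k * j) = u := hall u
        have hu0 : (u : F) ≠ 0 := Units.ne_zero u
        have : (u : F) ^ (q ^ (k * j) - 1) * u = 1 * u := by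
          rw [one_mul, ← pow_succ, Nat.sub_add_cancel hqkj]; exact hu
        have hcoe : (u : F) ^ (q ^ (k * j) - 1) = 1 := mul_right_cancel₀ hu0 this
        ext
        push_cast
        exact hcoe
      · intro hall x
        rcases eq_or_ne x 0 with rfl | hx0
        · exact zero_pow (by positivity)
        · lift x to Fˣ using isUnit_iff_ne_zero.mpr hx0
          have := hall x
          have hcoe : (x : F) ^ (q ^ (k * j) - 1) = 1 := by
            have := congrArg (Units.val) this
            push_cast at this
            exact this
          calc (x : F) ^ q ^ (k * j) = (x : F) ^ (q ^ (k * j) - 1) * x := by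
                rw [← pow_succ, Nat.sub_add_cancel hqkj]
            _ = x := by rw [hcoe, one_mul]
    have step3 : (∀ u : Fˣ, u ^ (q ^ (k * j) - 1) = 1) ↔ q ^ (μ * s) - 1 ∣ q ^ (k * j) - 1 := by
      have := FiniteField.forall_pow_eq_one_iff F (q ^ (k * j) - 1)
      rwa [hF] at this
    have step4 : q ^ (μ * s) - 1 ∣ q ^ (k * j) - 1 ↔ μ * s ∣ k * j := by
      constructor
      · exact st17_dvd_of_pow_sub_one_dvd hq2 hμs
      · intro hdvd
        obtain ⟨t, ht⟩ := hdvd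
        rw [ht]
        exact Nat.pow_sub_one_dvd_pow_sub_one q (Dvd.intro t rfl)
    have step5 : μ * s ∣ k * j ↔ μ * s ∣ j := by
      constructor
      · intro hdvd
        have hco : Nat.Coprime (μ * s) k := (Nat.coprime_comm.mp part1)
        exact hco.dvd_of_dvd_mul_left hdvd
      · exact fun hdvd => hdvd.mul_left k
    rw [step1, step2, step3, step4, step5]
  -- Part 2 : orderOf θ = μ s
  have part2 : orderOf θ = μ * s := by
    have h1 : θ ^ (μ * s) = 1 := (hθone (μ * s)).mpr dvd_rfl
    have h2 : orderOf θ ∣ μ * s := orderOf_dvd_of_pow_eq_one h1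
    have h3 : μ * s ∣ orderOf θ := (hθone (orderOf θ)).mp (pow_orderOf_eq_one θ)
    exact Nat.dvd_antisymm h2 h3
  -- Part 3 : fixed field of θ has q elements
  have part3 : Nat.card {x : F // θ x = x} = q := by
    have hiff : ∀ x : F, θ x = x ↔ x ^ q ^ 1 = x := by
      intro x
      rw [hθ]
      constructor
      · intro hx
        have := st17_gcd_fixed hq2 hkpos hμs x hx (hcard_fix x)
        rwa [part1] at this
      · intro hx
        have := st17_iter x hx k
        rwa [one_mul] at this
    rw [Nat.card_congr (Equiv.subtypeEquivRight hiff)]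
    have := st17_count_eq hq2 hμs one_pos (one_dvd _) hF
    rw [this, pow_one]
  -- Part 4
  have part4 : ∀ x : F, x ^ q ^ μ = x → θ x = x ^ q ^ h := by
    intro x hx
    rw [hθ, hk]
    have hfix : x ^ q ^ (μ * a) = x := st17_iter x hx a
    calc x ^ q ^ (a * μ + h) = x ^ (q ^ (μ * a) * q ^ h) := by
          rw [← pow_add]; ring_nf
      _ = (x ^ q ^ (μ * a)) ^ q ^ h := by rw [pow_mul]
      _ = x ^ q ^ h := by rw [hfix]
  -- Part 5
  have part5 : ∀ m : ℕ, 0 < m →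
      ((∀ x : F, x ^ q ^ μ = x → x ^ q ^ (h * m) = x) ↔ μ ∣ m) := by
    intro m hm
    constructor
    · intro H
      -- every element of E = {x | x^{q^μ} = x} is fixed by q^g with g = gcd μ (h m)
      set g := Nat.gcd μ (h * m) with hg
      have hgpos : 0 < g := Nat.gcd_pos_of_pos_left _ hμ
      have hgdvdμ : g ∣ μ := Nat.gcd_dvd_left _ _
      have hEsub : ∀ x : F, x ^ q ^ μ = x → x ^ q ^ g = x := by
        intro x hx
        exact st17_gcd_fixed hq2 hμ (by positivity) x hx (H x hx)
      -- counting
      have hcardE : Nat.card {x : F // x ^ q ^ μ = x} = q ^ μ :=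
        st17_count_eq hq2 hμs hμ (Dvd.intro s rfl) hF
      have hle : Nat.card {x : F // x ^ q ^ μ = x} ≤ Nat.card {x : F // x ^ q ^ g = x} := by
        classical
        rw [Nat.card_eq_fintype_card, Nat.card_eq_fintype_card,
          Fintype.card_subtype, Fintype.card_subtype]
        apply Finset.card_le_card
        intro x hx
        rw [Finset.mem_filter] at hx ⊢
        exact ⟨hx.1, hEsub x hx.2⟩
      have hgle : Nat.card {x : F // x ^ q ^ g = x} ≤ q ^ g :=
        st17_count_le (Nat.one_lt_pow (by omega) (by omega))
      have hμleg : μ ≤ g := by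
        have : q ^ μ ≤ q ^ g := by
          rw [← hcardE]
          exact le_trans hle hgle
        exact (Nat.pow_le_pow_iff_right (by omega)).mp this
      have hgeq : g = μ := Nat.le_antisymm (Nat.le_of_dvd hμ hgdvdμ) hμleg
      have hμdvdhm : μ ∣ h * m := hgeq ▸ Nat.gcd_dvd_right μ (h * m)
      have hco : Nat.Coprime μ h := Nat.coprime_comm.mp hgcdhμ
      exact hco.dvd_of_dvd_mul_left hμdvdhm
    · intro hdvd x hx
      obtain ⟨t, rfl⟩ := hdvd
      have : x ^ q ^ (μ * (h * t)) = x := st17_iter x hx (h * t)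
      have heq : h * (μ * t) = μ * (h * t) := by ring
      rwa [heq]
  -- Part 6
  have part6 : Nat.card {x : F // x ^ q ^ μ = x ∧ x ^ q ^ h = x} = q := by
    have hiff : ∀ x : F, (x ^ q ^ μ = x ∧ x ^ q ^ h = x) ↔ x ^ q ^ 1 = x := by
      intro x
      constructor
      · rintro ⟨h1, h2⟩
        have := st17_gcd_fixed hq2 hμ hh x h1 h2
        rw [Nat.gcd_comm] at this
        rwa [hgcdhμ] at this
      · intro hx
        constructor
        · have := st17_iter x hx μ; rwa [one_mul] at this
        · have := st17_iter x hx h; rwa [one_mul] at this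
    rw [Nat.card_congr (Equiv.subtypeEquivRight hiff)]
    have := st17_count_eq hq2 hμs one_pos (one_dvd _) hF
    rw [this, pow_one]
  exact ⟨part1, part2, part3, part4, part5, part6⟩
end
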